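/- arXiv:1007.1575 — 7 statements merged into one kernel-verified Lean document; each statement's English description precedes it below -/
import Mathlib

section
/- Let P, Q1, Q2 be orthogonal projections on H with ‖P − Q1‖ < 1 and ‖P − Q2‖ < 1, and let X1, X2 be the angular operators for P such that Ran Q1 = G(X1) and Ran Q2 = G(X2). Define the unitary operator U1 = (P + X1)(I + X1*X1)^{-1/2} P + (P⊥ − X1*)(I + X1 X1*)^{-1/2} P⊥ on H (which satisfies P = U1* Q1 U1). Then the orthogonal projection Q := U1* Q2 U1 admits the factorization Q = A^{-1/2} B C B* A^{-1/2}, where A = I + X1*X1 + X1X1*, B = (I + X1*X2 + X2 − X1) P, and C = (I + X2*X2)^{-1}. -/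
set_option linter.unusedSectionVars false
set_option maxHeartbeats 6000000

open ContinuousLinearMap

/-- `P` is an orthogonal projection: `P = P* = P²`. -/
def IsOrthogonalProjection {H : Type*} [NormedAddCommGroup H] [InnerProductSpace ℂ H]
    [CompleteSpace H] (P : H →L[ℂ] H) : Prop :=
  IsSelfAdjoint P ∧ P * P = P

/-- `X` is an angular operator for the orthogonal projection `P`: `X = P⊥ X P`. -/
def IsAngularOperator {H : Type*} [NormedAddCommGroup H] [InnerProductSpace ℂ H]
    [CompleteSpace H] (P X : H →L[ℂ] H) : Prop :=
  X = (1 - P) * X * P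

/-- `Ran Q` is the graph subspace `G(X) = {u + X u : u ∈ Ran P}`. -/
def HasGraphRange {H : Type*} [NormedAddCommGroup H] [InnerProductSpace ℂ H]
    [CompleteSpace H] (P X Q : H →L[ℂ] H) : Prop :=
  Set.range ⇑Q = (fun u => u + X u) '' Set.range ⇑P

/-- The unitary operator
`U₁ = (P + X₁)(I + X₁*X₁)^{-1/2} P + (P⊥ − X₁*)(I + X₁X₁*)^{-1/2} P⊥`. -/
noncomputable def angularUnitary {H : Type*} [NormedAddCommGroup H] [InnerProductSpace ℂ H]
    [CompleteSpace H] (P X₁ : H →L[ℂ] H) : H →L[ℂ] H :=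
  (P + X₁) * Ring.inverse (CFC.sqrt (1 + adjoint X₁ * X₁)) * P
    + ((1 - P) - adjoint X₁) * Ring.inverse (CFC.sqrt (1 + X₁ * adjoint X₁)) * (1 - P)

section Aux
variable {A : Type*} [CStarAlgebra A] [PartialOrder A] [StarOrderedRing A]

lemma aux_isUnit_one_add {x : A} (hx : 0 ≤ x) : IsUnit (1 + x) :=
  CStarAlgebra.isUnit_of_le 1 (le_add_of_nonneg_right hx) isStrictlyPositive_one

lemma aux_commute_ringInverse {a b : A} (hb : IsUnit b) (h : Commute a b) :
    Commute a (Ring.inverse b) := by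
  obtain ⟨u, rfl⟩ := hb
  rw [Ring.inverse_unit]
  exact h.units_inv_right

lemma aux_isUnit_sqrt {a : A} (ha : 0 ≤ a) (hu : IsUnit a) : IsUnit (CFC.sqrt a) := by
  set s := CFC.sqrt a with hs
  have hss : s * s = a := CFC.sqrt_mul_sqrt_self a ha
  have hcsa : Commute s a := by rw [← hss]; exact (Commute.refl s).mul_right (Commute.refl s)
  have hc : Commute s (Ring.inverse a) := aux_commute_ringInverse hu hcsa
  refine ⟨⟨s, s * Ring.inverse a, ?_, ?_⟩, rfl⟩
  · rw [← mul_assoc, hss, Ring.mul_inverse_cancel a hu]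
  · rw [mul_assoc, ← hc.eq, ← mul_assoc, hss, Ring.mul_inverse_cancel a hu]

lemma aux_commute_sqrt {p a : A} (hps : star p = p) (hp2 : p * p = p)
    (h : Commute p a) (ha : 0 ≤ a) : Commute p (CFC.sqrt a) := by
  set s := CFC.sqrt a with hsdef
  have hs0 : 0 ≤ s := CFC.sqrt_nonneg _
  have hss : s * s = a := CFC.sqrt_mul_sqrt_self a ha
  set w : A := p + p - 1 with hw
  have hws : star w = w := by simp [hw, hps]
  have hw2 : w * w = 1 := by
    simp only [hw, sub_mul, mul_sub, add_mul, mul_add, hp2, mul_one, one_mul]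
    abel
  have hwa : Commute w a := (h.add_left h).sub_left (Commute.one_left a)
  have hb : (w * s * w) * (w * s * w) = a := by
    calc (w * s * w) * (w * s * w) = w * s * (w * w) * s * w := by noncomm_ring
    _ = w * (s * s) * w := by rw [hw2]; noncomm_ring
    _ = a * (w * w) := by rw [hss, hwa.eq]; noncomm_ring
    _ = a := by rw [hw2, mul_one]
  have hb0 : 0 ≤ w * s * w := by
    have := star_left_conjugate_nonneg hs0 w
    rwa [hws] at this
  have hkey : s = w * s * w := CFC.sqrt_unique hb hb0
  have hws' : w * s = s * w := by
    calc w * s = w * (w * s * w) := by rw [← hkey]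
    _ = (w * w) * (s * w) := by noncomm_ring
    _ = s * w := by rw [hw2, one_mul]
  have h2 : p * s + p * s = s * p + s * p := by
    have h1 : p * s + p * s - s = s * p + s * p - s := by
      have := hws'
      simp only [hw, sub_mul, mul_sub, add_mul, mul_add, one_mul, mul_one] at this
      convert this using 1
    exact sub_left_inj.mp h1
  have h3 : (2 : ℂ) • (p * s) = (2 : ℂ) • (s * p) := by
    rw [two_smul, two_smul]; exact h2
  exact smul_right_injective A two_ne_zero h3

end Aux

section Hilbert
variable {H : Type*} [NormedAddCommGroup H] [InnerProductSpace ℂ H] [CompleteSpace H]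

lemma proj_eq_of_range_eq {P Q : H →L[ℂ] H} (hP : IsOrthogonalProjection P)
    (hQ : IsOrthogonalProjection Q) (h : Set.range ⇑P = Set.range ⇑Q) : P = Q := by
  have fix : ∀ R : H →L[ℂ] H, R * R = R → ∀ z ∈ Set.range ⇑R, R z = z := by
    rintro R hR z ⟨w, rfl⟩
    have := ContinuousLinearMap.ext_iff.mp hR w
    simpa [ContinuousLinearMap.mul_apply] using this
  have hQP : Q * P = P := by
    ext z
    have hz : P z ∈ Set.range ⇑Q := h ▸ Set.mem_range_self z
    simpa [ContinuousLinearMap.mul_apply] using fix Q hQ.2 _ hz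
  have hPQ : P * Q = Q := by
    ext z
    have hz : Q z ∈ Set.range ⇑P := h.symm ▸ Set.mem_range_self z
    simpa [ContinuousLinearMap.mul_apply] using fix P hP.2 _ hz
  calc P = Q * P := hQP.symm
    _ = star (star P * star Q) := by rw [star_mul, star_star, star_star]
    _ = star (P * Q) := by rw [hP.1.star_eq, hQ.1.star_eq]
    _ = star Q := by rw [hPQ]
    _ = Q := hQ.1.star_eq

/-- basic collapse identities for an angular operator -/
lemma angular_basic {p x : H →L[ℂ] H} (hps : star p = p) (hp2 : p * p = p)
    (hx : x = (1 - p) * x * p) :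
    p * x = 0 ∧ x * p = x ∧ star x * p = 0 ∧ p * star x = star x ∧ x * x = 0 := by
  have hpx : p * x = 0 := by
    conv_lhs => rw [hx]
    rw [← mul_assoc, ← mul_assoc, mul_sub, mul_one, hp2, sub_self, zero_mul, zero_mul]
  have hxp : x * p = x := by
    conv_lhs => rw [hx]
    rw [mul_assoc, hp2, ← hx]
  have hsxp : star x * p = 0 := by rw [← hps, ← star_mul, hpx, star_zero]
  have hpsx : p * star x = star x := by rw [← hps, ← star_mul, hxp]
  have hxx : x * x = 0 := by
    nth_rewrite 2 [hx]
    have hx1p : x * (1 - p) = 0 := by rw [mul_sub, mul_one, hxp, sub_self]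
    rw [← mul_assoc, ← mul_assoc, hx1p, zero_mul, zero_mul]
  exact ⟨hpx, hxp, hsxp, hpsx, hxx⟩

/-- The orthogonal projection onto a graph subspace has the standard formula. -/
lemma graph_proj_formula {p y q : H →L[ℂ] H} (hp : IsOrthogonalProjection p)
    (hq : IsOrthogonalProjection q) (hy : y = (1 - p) * y * p)
    (hg : Set.range ⇑q = (fun u => u + y u) '' Set.range ⇑p) :
    q = (p + y) * Ring.inverse (1 + star y * y) * (p + star y) := by
  obtain ⟨hpsa, hp2⟩ := hp
  have hps : star p = p := hpsa.star_eq
  obtain ⟨hpy, hyp, hsyp, hpsy, hyy⟩ := angular_basic hps hp2 hy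
  set K : H →L[ℂ] H := 1 + star y * y with hK
  have hK0 : 0 ≤ K := add_nonneg zero_le_one (star_mul_self_nonneg y)
  have hKu : IsUnit K := aux_isUnit_one_add (star_mul_self_nonneg y)
  -- parametric collapse rules
  have hpp' : ∀ z : H →L[ℂ] H, p * (p * z) = p * z := fun z => by rw [← mul_assoc, hp2]
  have hpy' : ∀ z : H →L[ℂ] H, p * (y * z) = 0 := fun z => by rw [← mul_assoc, hpy, zero_mul]
  have hyp' : ∀ z : H →L[ℂ] H, y * (p * z) = y * z := fun z => by rw [← mul_assoc, hyp]
  have hsyp' : ∀ z : H →L[ℂ] H, star y * (p * z) = 0 := fun z => by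
    rw [← mul_assoc, hsyp, zero_mul]
  have hpsy' : ∀ z : H →L[ℂ] H, p * (star y * z) = star y * z := fun z => by
    rw [← mul_assoc, hpsy]
  have hsysy' : ∀ z : H →L[ℂ] H, star y * (star y * z) = 0 := fun z => by
    have : star y * star y = 0 := by rw [← star_mul, hyy, star_zero]
    rw [← mul_assoc, this, zero_mul]
  set R : H →L[ℂ] H := (p + y) * Ring.inverse K * (p + star y) with hR
  have e1 : (p + star y) * (p + y) = K * p := by
    simp only [hK, mul_add, add_mul, one_mul, mul_assoc, hp2, hpy, hsyp, hyp, add_zero,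
      zero_add, mul_zero, zero_mul]
  have e3 : (p + y) * p = p + y := by
    simp only [add_mul, hp2, hyp]
  have e4 : (p + star y) * (K * p) = K * p := by
    simp only [hK, mul_add, add_mul, one_mul, mul_assoc, hpp', hpsy', hsyp', hsysy',
      hp2, hpy, hyp, hsyp, hpsy, add_zero, zero_add, mul_zero, zero_mul]
  have hRR : R * R = R := by
    have h1 : R * R = (p + y) * (Ring.inverse K * (K * (p * (Ring.inverse K * (p + star y))))) := by
      calc R * R
          = (p + y) * (Ring.inverse K * (((p + star y) * (p + y)) *
              (Ring.inverse K * (p + star y)))) := by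
            rw [hR]; simp only [mul_assoc]
        _ = _ := by rw [e1]; simp only [mul_assoc]
    rw [h1, Ring.inverse_mul_cancel_left _ _ hKu, ← mul_assoc, e3, hR]
    simp only [mul_assoc]
  have hRsa : star R = R := by
    have hKsa : star K = K := by simp [hK, star_add, star_mul, star_star]
    have hcsa : star (Ring.inverse K) = Ring.inverse K := by rw [← Ring.inverse_star, hKsa]
    simp only [hR, star_mul, star_add, hps, hcsa, star_star, mul_assoc]
  have hfac1 : R = (1 + y) * (p * (Ring.inverse K * (p + star y))) := by
    rw [hR]
    simp only [add_mul, one_mul, mul_assoc, hyp']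
  have hfac2 : R * (K * p) = (1 + y) * p := by
    calc R * (K * p)
        = (p + y) * (Ring.inverse K * ((p + star y) * (K * p))) := by
          rw [hR]; simp only [mul_assoc]
      _ = (p + y) * (Ring.inverse K * (K * p)) := by rw [e4]
      _ = (p + y) * p := by rw [Ring.inverse_mul_cancel_left _ _ hKu]
      _ = (1 + y) * p := by simp only [add_mul, one_mul, hp2, hyp]
  have hrange : Set.range ⇑R = (fun u => u + y u) '' Set.range ⇑p := by
    ext z
    constructor
    · rintro ⟨v, rfl⟩
      refine ⟨p ((Ring.inverse K * (p + star y)) v), ⟨_, rfl⟩, ?_⟩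
      conv_rhs => rw [hfac1]
      simp [ContinuousLinearMap.mul_apply, ContinuousLinearMap.add_apply,
        ContinuousLinearMap.one_apply]
    · rintro ⟨u, ⟨v, rfl⟩, rfl⟩
      refine ⟨(K * p) v, ?_⟩
      simpa [ContinuousLinearMap.mul_apply, ContinuousLinearMap.add_apply,
        ContinuousLinearMap.one_apply] using ContinuousLinearMap.ext_iff.mp hfac2 v
  exact proj_eq_of_range_eq hq ⟨hRsa, hRR⟩ (hg.trans hrange.symm)

end Hilbert

/-- **Four projections lemma.** If `‖P − Q₁‖ < 1` and `‖P − Q₂‖ < 1` with angular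
operators `X₁, X₂` for `P` such that `Ran Qⱼ = G(Xⱼ)`, then
`Q := U₁* Q₂ U₁ = A^{-1/2} B C B* A^{-1/2}` with `A = I + X₁*X₁ + X₁X₁*`,
`B = (I + X₁*X₂ + X₂ − X₁) P` and `C = (I + X₂*X₂)⁻¹`. -/
theorem four_projections_lemma {H : Type*} [NormedAddCommGroup H] [InnerProductSpace ℂ H]
    [CompleteSpace H] [TopologicalSpace.SeparableSpace H]
    (P Q₁ Q₂ X₁ X₂ : H →L[ℂ] H)
    (hP : IsOrthogonalProjection P) (hQ₁ : IsOrthogonalProjection Q₁)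
    (hQ₂ : IsOrthogonalProjection Q₂)
    (hPQ₁ : ‖P - Q₁‖ < 1) (hPQ₂ : ‖P - Q₂‖ < 1)
    (hX₁ : IsAngularOperator P X₁) (hX₁g : HasGraphRange P X₁ Q₁)
    (hX₂ : IsAngularOperator P X₂) (hX₂g : HasGraphRange P X₂ Q₂) :
    adjoint (angularUnitary P X₁) * Q₂ * angularUnitary P X₁ =
      Ring.inverse (CFC.sqrt (1 + adjoint X₁ * X₁ + X₁ * adjoint X₁)) *
        ((1 + adjoint X₁ * X₂ + X₂ - X₁) * P) *
        Ring.inverse (1 + adjoint X₂ * X₂) *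
        adjoint ((1 + adjoint X₁ * X₂ + X₂ - X₁) * P) *
        Ring.inverse (CFC.sqrt (1 + adjoint X₁ * X₁ + X₁ * adjoint X₁)) := by
  obtain ⟨hpsa, hp2⟩ := hP
  have hps : star P = P := hpsa.star_eq
  obtain ⟨hpx, hxp, hsxp, hpsx, hxx⟩ := angular_basic hps hp2 hX₁
  obtain ⟨hpy, hyp, hsyp, hpsy, hyy⟩ := angular_basic hps hp2 hX₂
  have hx1p : X₁ * (1 - P) = 0 := by rw [mul_sub, mul_one, hxp, sub_self]
  have hy1p : X₂ * (1 - P) = 0 := by rw [mul_sub, mul_one, hyp, sub_self]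
  have hxy : X₁ * X₂ = 0 := by
    nth_rewrite 1 [hX₂]
    rw [← mul_assoc, ← mul_assoc, hx1p, zero_mul, zero_mul]
  have hyx : X₂ * X₁ = 0 := by
    nth_rewrite 1 [hX₁]
    rw [← mul_assoc, ← mul_assoc, hy1p, zero_mul, zero_mul]
  have hsxsy : star X₁ * star X₂ = 0 := by rw [← star_mul, hyx, star_zero]
  have hsysx : star X₂ * star X₁ = 0 := by rw [← star_mul, hxy, star_zero]
  have hsxsx : star X₁ * star X₁ = 0 := by rw [← star_mul, hxx, star_zero]
  have hsysy : star X₂ * star X₂ = 0 := by rw [← star_mul, hyy, star_zero]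
  -- parametric collapse rules
  have hpp' : ∀ z : H →L[ℂ] H, P * (P * z) = P * z := fun z => by rw [← mul_assoc, hp2]
  have hpx' : ∀ z : H →L[ℂ] H, P * (X₁ * z) = 0 := fun z => by rw [← mul_assoc, hpx, zero_mul]
  have hxp' : ∀ z : H →L[ℂ] H, X₁ * (P * z) = X₁ * z := fun z => by rw [← mul_assoc, hxp]
  have hsxp' : ∀ z : H →L[ℂ] H, star X₁ * (P * z) = 0 := fun z => by
    rw [← mul_assoc, hsxp, zero_mul]
  have hpsx' : ∀ z : H →L[ℂ] H, P * (star X₁ * z) = star X₁ * z := fun z => by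
    rw [← mul_assoc, hpsx]
  have hxx' : ∀ z : H →L[ℂ] H, X₁ * (X₁ * z) = 0 := fun z => by rw [← mul_assoc, hxx, zero_mul]
  have hsxsx' : ∀ z : H →L[ℂ] H, star X₁ * (star X₁ * z) = 0 := fun z => by
    rw [← mul_assoc, hsxsx, zero_mul]
  have hpy' : ∀ z : H →L[ℂ] H, P * (X₂ * z) = 0 := fun z => by rw [← mul_assoc, hpy, zero_mul]
  have hyp' : ∀ z : H →L[ℂ] H, X₂ * (P * z) = X₂ * z := fun z => by rw [← mul_assoc, hyp]
  have hsyp' : ∀ z : H →L[ℂ] H, star X₂ * (P * z) = 0 := fun z => by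
    rw [← mul_assoc, hsyp, zero_mul]
  have hpsy' : ∀ z : H →L[ℂ] H, P * (star X₂ * z) = star X₂ * z := fun z => by
    rw [← mul_assoc, hpsy]
  have hyy' : ∀ z : H →L[ℂ] H, X₂ * (X₂ * z) = 0 := fun z => by rw [← mul_assoc, hyy, zero_mul]
  have hsysy' : ∀ z : H →L[ℂ] H, star X₂ * (star X₂ * z) = 0 := fun z => by
    rw [← mul_assoc, hsysy, zero_mul]
  have hxy' : ∀ z : H →L[ℂ] H, X₁ * (X₂ * z) = 0 := fun z => by rw [← mul_assoc, hxy, zero_mul]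
  have hyx' : ∀ z : H →L[ℂ] H, X₂ * (X₁ * z) = 0 := fun z => by rw [← mul_assoc, hyx, zero_mul]
  have hsxsy' : ∀ z : H →L[ℂ] H, star X₁ * (star X₂ * z) = 0 := fun z => by
    rw [← mul_assoc, hsxsy, zero_mul]
  have hsysx' : ∀ z : H →L[ℂ] H, star X₂ * (star X₁ * z) = 0 := fun z => by
    rw [← mul_assoc, hsysx, zero_mul]
  -- the projection Q₂
  have hq2 : Q₂ = (P + X₂) * Ring.inverse (1 + star X₂ * X₂) * (P + star X₂) :=
    graph_proj_formula ⟨hpsa, hp2⟩ hQ₂ hX₂ hX₂g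
  -- positivity and invertibility
  have h1xx0 : 0 ≤ 1 + star X₁ * X₁ := add_nonneg zero_le_one (star_mul_self_nonneg X₁)
  have h1xxu : IsUnit (1 + star X₁ * X₁) := aux_isUnit_one_add (star_mul_self_nonneg X₁)
  have hxsx0 : 0 ≤ X₁ * star X₁ := mul_star_self_nonneg X₁
  have h1xsx0 : 0 ≤ 1 + X₁ * star X₁ := add_nonneg zero_le_one hxsx0
  have h1xsxu : IsUnit (1 + X₁ * star X₁) := aux_isUnit_one_add hxsx0
  simp only [angularUnitary, ← ContinuousLinearMap.star_eq_adjoint]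
  set s := CFC.sqrt (1 + star X₁ * X₁) with hsdef
  set t := CFC.sqrt (1 + X₁ * star X₁) with htdef
  have hs0 : 0 ≤ s := CFC.sqrt_nonneg _
  have ht0 : 0 ≤ t := CFC.sqrt_nonneg _
  have hssa : star s = s := (IsSelfAdjoint.of_nonneg hs0).star_eq
  have htsa : star t = t := (IsSelfAdjoint.of_nonneg ht0).star_eq
  have hss : s * s = 1 + star X₁ * X₁ := CFC.sqrt_mul_sqrt_self _ h1xx0
  have htt : t * t = 1 + X₁ * star X₁ := CFC.sqrt_mul_sqrt_self _ h1xsx0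
  have hsu : IsUnit s := aux_isUnit_sqrt h1xx0 h1xxu
  have htu : IsUnit t := aux_isUnit_sqrt h1xsx0 h1xsxu
  have hcp1 : Commute P (1 + star X₁ * X₁) := by
    have h7 : P * (star X₁ * X₁) = star X₁ * X₁ * P := by
      rw [← mul_assoc, hpsx, mul_assoc, hxp]
    exact (Commute.one_right P).add_right h7
  have hcp2 : Commute P (1 + X₁ * star X₁) := by
    have h7 : P * (X₁ * star X₁) = X₁ * star X₁ * P := by
      rw [← mul_assoc, hpx, zero_mul, mul_assoc, hsxp, mul_zero]
    exact (Commute.one_right P).add_right h7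
  have hcps : Commute P s := aux_commute_sqrt hps hp2 hcp1 h1xx0
  have hcpt : Commute P t := aux_commute_sqrt hps hp2 hcp2 h1xsx0
  have hcps' : Commute P (Ring.inverse s) := aux_commute_ringInverse hsu hcps
  have hcpt' : Commute P (Ring.inverse t) := aux_commute_ringInverse htu hcpt
  have hs'sa : star (Ring.inverse s) = Ring.inverse s := by rw [← Ring.inverse_star, hssa]
  have ht'sa : star (Ring.inverse t) = Ring.inverse t := by rw [← Ring.inverse_star, htsa]
  -- swap and cancel rules
  have swps : ∀ z : H →L[ℂ] H, P * (s * z) = s * (P * z) := fun z => by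
    rw [← mul_assoc, hcps.eq, mul_assoc]
  have swpt : ∀ z : H →L[ℂ] H, P * (t * z) = t * (P * z) := fun z => by
    rw [← mul_assoc, hcpt.eq, mul_assoc]
  have swps' : ∀ z : H →L[ℂ] H, P * (Ring.inverse s * z) = Ring.inverse s * (P * z) :=
    fun z => by rw [← mul_assoc, hcps'.eq, mul_assoc]
  have swpt' : ∀ z : H →L[ℂ] H, P * (Ring.inverse t * z) = Ring.inverse t * (P * z) :=
    fun z => by rw [← mul_assoc, hcpt'.eq, mul_assoc]
  have hss' : ∀ z : H →L[ℂ] H, s * (s * z) = z + star X₁ * (X₁ * z) := fun z => by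
    rw [← mul_assoc, hss, add_mul, one_mul, mul_assoc]
  have htt' : ∀ z : H →L[ℂ] H, t * (t * z) = z + X₁ * (star X₁ * z) := fun z => by
    rw [← mul_assoc, htt, add_mul, one_mul, mul_assoc]
  have cs1 : ∀ z : H →L[ℂ] H, Ring.inverse s * (s * z) = z := fun z =>
    Ring.inverse_mul_cancel_left _ _ hsu
  have cs2 : ∀ z : H →L[ℂ] H, s * (Ring.inverse s * z) = z := fun z =>
    Ring.mul_inverse_cancel_left _ _ hsu
  have ct1 : ∀ z : H →L[ℂ] H, Ring.inverse t * (t * z) = z := fun z =>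
    Ring.inverse_mul_cancel_left _ _ htu
  have ct2 : ∀ z : H →L[ℂ] H, t * (Ring.inverse t * z) = z := fun z =>
    Ring.mul_inverse_cancel_left _ _ htu
  have cs3 : Ring.inverse s * s = 1 := Ring.inverse_mul_cancel _ hsu
  have cs4 : s * Ring.inverse s = 1 := Ring.mul_inverse_cancel _ hsu
  have ct3 : Ring.inverse t * t = 1 := Ring.inverse_mul_cancel _ htu
  have ct4 : t * Ring.inverse t = 1 := Ring.mul_inverse_cancel _ htu
  -- the square root of A = 1 + X₁*X₁ + X₁X₁*
  have hA0 : 0 ≤ 1 + star X₁ * X₁ + X₁ * star X₁ := add_nonneg h1xx0 hxsx0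
  have hsq : (s * P + t * (1 - P)) * (s * P + t * (1 - P)) =
      1 + star X₁ * X₁ + X₁ * star X₁ := by
    simp only [mul_add, add_mul, mul_sub, sub_mul, mul_one, one_mul, mul_assoc,
      swps, swpt, hss', htt', hss, htt, hcps.eq, hcpt.eq, hpp', hpx', hxp', hsxp', hpsx',
      hxx', hsxsx', hp2, hpx, hxp, hsxp, hpsx, hxx, hsxsx, mul_zero, zero_mul, add_zero,
      zero_add, sub_self, sub_zero]
    abel
  have hpos : 0 ≤ s * P + t * (1 - P) := by
    have e5 : star P * s * P = s * P := by rw [hps, hcps.eq, mul_assoc, hp2]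
    have h1psa : star (1 - P) = 1 - P := by rw [star_sub, star_one, hps]
    have e6 : star (1 - P) * t * (1 - P) = t * (1 - P) := by
      have hc1pt : (1 - P) * t = t * (1 - P) := by
        rw [sub_mul, mul_sub, mul_one, one_mul, hcpt.eq]
      rw [h1psa, hc1pt, mul_assoc]
      congr 1
      rw [mul_sub, sub_mul, sub_mul, mul_one, one_mul, hp2]
      abel
    have g1 : 0 ≤ s * P := e5 ▸ star_left_conjugate_nonneg hs0 P
    have g2 : 0 ≤ t * (1 - P) := e6 ▸ star_left_conjugate_nonneg ht0 (1 - P)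
    exact add_nonneg g1 g2
  have hme : CFC.sqrt (1 + star X₁ * X₁ + X₁ * star X₁) = s * P + t * (1 - P) :=
    CFC.sqrt_unique hsq hpos
  have hnm : (Ring.inverse s * P + Ring.inverse t * (1 - P)) * (s * P + t * (1 - P)) = 1 := by
    simp only [mul_add, add_mul, mul_sub, sub_mul, mul_one, one_mul, mul_assoc,
      swps, swpt, swps', swpt', hcps.eq, hcpt.eq, hcps'.eq, hcpt'.eq,
      cs1, cs2, ct1, ct2, cs3, cs4, ct3, ct4, hpp',
      hp2, mul_zero, zero_mul, add_zero, zero_add, sub_self, sub_zero]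
    abel
  have hmn : (s * P + t * (1 - P)) * (Ring.inverse s * P + Ring.inverse t * (1 - P)) = 1 := by
    simp only [mul_add, add_mul, mul_sub, sub_mul, mul_one, one_mul, mul_assoc,
      swps, swpt, swps', swpt', hcps.eq, hcpt.eq, hcps'.eq, hcpt'.eq,
      cs1, cs2, ct1, ct2, cs3, cs4, ct3, ct4, hpp',
      hp2, mul_zero, zero_mul, add_zero, zero_add, sub_self, sub_zero]
    abel
  have hmu : IsUnit (CFC.sqrt (1 + star X₁ * X₁ + X₁ * star X₁)) := by
    rw [hme]; exact ⟨⟨_, _, hmn, hnm⟩, rfl⟩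
  have h6 : CFC.sqrt (1 + star X₁ * X₁ + X₁ * star X₁) *
      (Ring.inverse s * P + Ring.inverse t * (1 - P)) = 1 := by rw [hme]; exact hmn
  have hminv : Ring.inverse (CFC.sqrt (1 + star X₁ * X₁ + X₁ * star X₁)) =
      Ring.inverse s * P + Ring.inverse t * (1 - P) := by
    calc Ring.inverse (CFC.sqrt (1 + star X₁ * X₁ + X₁ * star X₁))
        = Ring.inverse (CFC.sqrt (1 + star X₁ * X₁ + X₁ * star X₁)) *
            (CFC.sqrt (1 + star X₁ * X₁ + X₁ * star X₁) *
              (Ring.inverse s * P + Ring.inverse t * (1 - P))) := by rw [h6, mul_one]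
      _ = _ := by rw [← mul_assoc, Ring.inverse_mul_cancel _ hmu, one_mul]
  rw [hq2, hminv]
  set u : H →L[ℂ] H := (P + X₁) * Ring.inverse s * P
      + ((1 - P) - star X₁) * Ring.inverse t * (1 - P) with hu
  set n : H →L[ℂ] H := Ring.inverse s * P + Ring.inverse t * (1 - P) with hn
  have hnsa : star n = n := by
    rw [hn]
    simp only [star_add, star_mul, star_sub, star_one, hs'sa, ht'sa, hps]
    rw [hcps'.eq]
    have h9 : (1 - P) * Ring.inverse t = Ring.inverse t * (1 - P) := by
      rw [sub_mul, mul_sub, one_mul, mul_one, hcpt'.eq]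
    rw [h9]
  -- trailing-projection collapse rules
  have e1s : star X₁ * (Ring.inverse s * P) = 0 := by
    rw [← hcps'.eq, ← mul_assoc, hsxp, zero_mul]
  have e1t : star X₁ * (Ring.inverse t * P) = 0 := by
    rw [← hcpt'.eq, ← mul_assoc, hsxp, zero_mul]
  have e2s : star X₂ * (Ring.inverse s * P) = 0 := by
    rw [← hcps'.eq, ← mul_assoc, hsyp, zero_mul]
  have e2t : star X₂ * (Ring.inverse t * P) = 0 := by
    rw [← hcpt'.eq, ← mul_assoc, hsyp, zero_mul]
  have e3s : X₁ * (Ring.inverse s * P) = X₁ * Ring.inverse s := by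
    rw [← hcps'.eq, ← mul_assoc, hxp]
  have e3t : X₁ * (Ring.inverse t * P) = X₁ * Ring.inverse t := by
    rw [← hcpt'.eq, ← mul_assoc, hxp]
  have e4s : X₂ * (Ring.inverse s * P) = X₂ * Ring.inverse s := by
    rw [← hcps'.eq, ← mul_assoc, hyp]
  have e4t : X₂ * (Ring.inverse t * P) = X₂ * Ring.inverse t := by
    rw [← hcpt'.eq, ← mul_assoc, hyp]
  have f1s : ∀ z : H →L[ℂ] H, star X₁ * (Ring.inverse s * (P * z)) = 0 := fun z => by
    rw [← swps', hsxp']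
  have f1t : ∀ z : H →L[ℂ] H, star X₁ * (Ring.inverse t * (P * z)) = 0 := fun z => by
    rw [← swpt', hsxp']
  have f2s : ∀ z : H →L[ℂ] H, star X₂ * (Ring.inverse s * (P * z)) = 0 := fun z => by
    rw [← swps', hsyp']
  have f2t : ∀ z : H →L[ℂ] H, star X₂ * (Ring.inverse t * (P * z)) = 0 := fun z => by
    rw [← swpt', hsyp']
  have f3s : ∀ z : H →L[ℂ] H, X₁ * (Ring.inverse s * (P * z)) = X₁ * (Ring.inverse s * z) :=
    fun z => by rw [← swps', hxp']
  have f3t : ∀ z : H →L[ℂ] H, X₁ * (Ring.inverse t * (P * z)) = X₁ * (Ring.inverse t * z) :=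
    fun z => by rw [← swpt', hxp']
  have f4s : ∀ z : H →L[ℂ] H, X₂ * (Ring.inverse s * (P * z)) = X₂ * (Ring.inverse s * z) :=
    fun z => by rw [← swps', hyp']
  have f4t : ∀ z : H →L[ℂ] H, X₂ * (Ring.inverse t * (P * z)) = X₂ * (Ring.inverse t * z) :=
    fun z => by rw [← swpt', hyp']
  have key : star ((1 + star X₁ * X₂ + X₂ - X₁) * P) * n = (P + star X₂) * u := by
    rw [hu, hn]
    simp only [star_mul, star_add, star_sub, star_one, star_star, hps]
    simp only [mul_add, add_mul, mul_sub, sub_mul, mul_one, one_mul, mul_assoc,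
      swps', swpt', hcps'.eq, hcpt'.eq,
      hpp', hpx', hxp', hsxp', hpsx', hxx', hsxsx',
      hpy', hyp', hsyp', hpsy', hyy', hsysy', hxy', hyx', hsxsy', hsysx',
      hp2, hpx, hxp, hsxp, hpsx, hxx, hsxsx, hpy, hyp, hsyp, hpsy, hyy, hsysy,
      hxy, hyx, hsxsy, hsysx,
      e1s, e1t, e2s, e2t, e3s, e3t, e4s, e4t, f1s, f1t, f2s, f2t, f3s, f3t, f4s, f4t,
      mul_zero, zero_mul, add_zero, zero_add, sub_self, sub_zero, zero_sub,
      neg_mul, mul_neg, neg_neg]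
    abel
  have key3 : star u * (P + X₂) = n * ((1 + star X₁ * X₂ + X₂ - X₁) * P) := by
    have h8 : star ((P + star X₂) * u) = star u * (P + X₂) := by
      simp only [star_mul, star_add, star_star, hps]
    rw [← h8, ← key, star_mul, hnsa, star_star]
  calc star u * ((P + X₂) * Ring.inverse (1 + star X₂ * X₂) * (P + star X₂)) * u
      = (star u * (P + X₂)) * (Ring.inverse (1 + star X₂ * X₂) * ((P + star X₂) * u)) := by
        simp only [mul_assoc]
    _ = (n * ((1 + star X₁ * X₂ + X₂ - X₁) * P)) *
        (Ring.inverse (1 + star X₂ * X₂) *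
          (star ((1 + star X₁ * X₂ + X₂ - X₁) * P) * n)) := by rw [key3, ← key]
    _ = n * ((1 + star X₁ * X₂ + X₂ - X₁) * P) * Ring.inverse (1 + star X₂ * X₂) *
        star ((1 + star X₁ * X₂ + X₂ - X₁) * P) * n := by simp only [mul_assoc]
end

section
/- Let γ : [a,b] → 𝒫 be a piecewise C¹-smooth path of orthogonal projections such that for every t ∈ [a,b] there is an angular operator X_t for γ(a) with Ran γ(t) = G(X_t). If J ⊂ [a,b] is an interval on which γ is C¹-smooth, then the map t ↦ X_t is C¹-smooth (in operator norm) on J; in particular, t ↦ X_t is a piecewise C¹-smooth path on [a,b]. -/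
open ContinuousLinearMap

/-- A map `γ` is a piecewise `C¹`-smooth path on `[a,b]` if there is a partition
`a = t₀ < … < t_n = b` such that `γ` is `C¹`-smooth on each `[t_j, t_{j+1}]`. -/
def PiecewiseC1On {E : Type*} [NormedAddCommGroup E] [NormedSpace ℝ E]
    (γ : ℝ → E) (a b : ℝ) : Prop :=
  ∃ (n : ℕ) (t : ℕ → ℝ), t 0 = a ∧ t n = b ∧ (∀ i < n, t i < t (i + 1)) ∧
    ∀ i < n, ContDiffOn ℝ 1 γ (Set.Icc (t i) (t (i + 1)))

section Aux

variable {H : Type*} [NormedAddCommGroup H] [InnerProductSpace ℂ H] [CompleteSpace H]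

lemma aux_main (P Q Y : H →L[ℂ] H)
    (hP : IsOrthogonalProjection P) (hQ : IsOrthogonalProjection Q)
    (hY : IsAngularOperator P Y) (hR : HasGraphRange P Y Q) :
    (P * Q * P + 1 - P) * (1 + star Y * Y) = 1 ∧
    (1 + star Y * Y) * (P * Q * P + 1 - P) = 1 ∧
    Y * (P * Q * P + 1 - P) = (1 - P) * Q * P := by
  obtain ⟨hPsa, hP2⟩ := hP
  obtain ⟨hQsa, hQ2⟩ := hQ
  rw [IsAngularOperator] at hY
  rw [HasGraphRange] at hR
  have hP1P : P * (1 - P) = 0 := by rw [mul_sub, mul_one, hP2, sub_self]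
  have h1PP : (1 - P) * P = 0 := by rw [sub_mul, one_mul, hP2, sub_self]
  have hPY : P * Y = 0 := by
    rw [hY, ← mul_assoc, ← mul_assoc, hP1P, zero_mul, zero_mul]
  have hYP : Y * P = Y := by
    conv_lhs => rw [hY, mul_assoc, hP2]
    rw [← hY]
  have hY1P : Y * (1 - P) = 0 := by rw [mul_sub, mul_one, hYP, sub_self]
  set s := star Y with hs_def
  have hs : s = P * s * (1 - P) := by
    rw [hs_def]
    conv_lhs => rw [hY]
    rw [star_mul, star_mul, hPsa.star_eq, star_sub, star_one, hPsa.star_eq, mul_assoc]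
  have hPs : P * s = s := by
    conv_lhs => rw [hs, ← mul_assoc, ← mul_assoc, hP2]
    rw [← hs]
  have hsP : s * P = 0 := by
    rw [hs, mul_assoc, h1PP, mul_zero]
  -- pointwise identities
  have hApt : ∀ v ∈ Set.range ⇑Q, Q v = v := by
    rintro v ⟨w, rfl⟩
    have := congrArg (fun T : H →L[ℂ] H => T w) hQ2
    simpa [mul_apply] using this
  have hA : (1 - P) * Q = Y * (P * Q) := by
    ext h
    have hQh : Q h ∈ Set.range ⇑Q := ⟨h, rfl⟩
    rw [hR] at hQh
    obtain ⟨u, ⟨w, rfl⟩, he⟩ := hQh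
    simp only at he
    have hPu : P (P w) = P w := by
      have := congrArg (fun T : H →L[ℂ] H => T w) hP2
      simpa [mul_apply] using this
    have hPYu : P (Y (P w)) = 0 := by
      have := congrArg (fun T : H →L[ℂ] H => T (P w)) hPY
      simpa [mul_apply] using this
    have hPQh : P (Q h) = P w := by
      rw [← he, map_add, hPu, hPYu, add_zero]
    simp only [mul_apply_eq_comp, sub_apply, one_apply_eq_self]
    rw [hPQh, ← he]
    abel
  have hB : Q * (P + Y) = P + Y := by
    ext h
    have hmem : P h + Y (P h) ∈ (fun u => u + Y u) '' Set.range ⇑P :=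
      ⟨P h, ⟨h, rfl⟩, rfl⟩
    rw [← hR] at hmem
    have := hApt _ hmem
    simp only [mul_apply_eq_comp, add_apply]
    have hYh : Y h = Y (P h) := by
      conv_lhs => rw [← hYP]
      simp [mul_apply]
    rw [hYh, this]
  -- derived identities
  have hC : P * Q * P + P * (Q * Y) = P := by
    have := congrArg (fun T => P * T) hB
    simp only [mul_add] at this
    rw [← mul_assoc, ← mul_assoc] at this
    calc P * Q * P + P * (Q * Y) = P * Q * P + P * Q * Y := by noncomm_ring
    _ = P * P + P * Y := this
    _ = P := by rw [hP2, hPY, add_zero]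
  have hA' : Q * (1 - P) = Q * P * s := by
    have := congrArg star hA
    rw [star_mul, star_mul, hQsa.star_eq, star_sub, star_one, hPsa.star_eq,
      star_mul, hQsa.star_eq, hPsa.star_eq, ← hs_def] at this
    rw [this, mul_assoc]
  have hQs : Q * s = Q * (1 - P) := by
    conv_lhs => rw [← hPs, ← mul_assoc, ← hA']
  have hN1 : (P * Q * P + 1 - P) * (1 + s * Y) = 1 := by
    have e1 : P * Q * P * (s * Y) = P * (Q * Y) := by
      calc P * Q * P * (s * Y) = P * Q * (P * s * Y) := by noncomm_ring
      _ = P * Q * (s * Y) := by rw [hPs]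
      _ = P * (Q * s) * Y := by noncomm_ring
      _ = P * (Q * (1 - P)) * Y := by rw [hQs]
      _ = P * Q * Y - P * Q * (P * Y) := by noncomm_ring
      _ = P * (Q * Y) := by rw [hPY, mul_zero, sub_zero, mul_assoc]
    have e2 : P * (s * Y) = s * Y := by rw [← mul_assoc, hPs]
    calc (P * Q * P + 1 - P) * (1 + s * Y)
        = P * Q * P + P * Q * P * (s * Y) + 1 + s * Y - P - P * (s * Y) := by noncomm_ring
      _ = P * Q * P + P * (Q * Y) + 1 + s * Y - P - (s * Y) := by rw [e1, e2]
      _ = P + 1 - P := by rw [hC]; abel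
      _ = 1 := by abel
  have hN2 : (1 + s * Y) * (P * Q * P + 1 - P) = 1 := by
    have hstarN : star (P * Q * P + 1 - P) = P * Q * P + 1 - P := by
      simp only [star_sub, star_add, star_mul, star_one, hPsa.star_eq, hQsa.star_eq]
      noncomm_ring
    have hstarI : star (1 + s * Y) = 1 + s * Y := by
      simp only [star_add, star_one, star_mul, hs_def, star_star]
    have h := congrArg star hN1
    rw [star_mul, hstarN, hstarI, star_one] at h
    exact h
  have hN3 : Y * (P * Q * P + 1 - P) = (1 - P) * Q * P := by
    have e : Y * (P * Q * P) = (1 - P) * Q * P := by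
      calc Y * (P * Q * P) = Y * (P * Q) * P := by noncomm_ring
      _ = (1 - P) * Q * P := by rw [← hA]
    calc Y * (P * Q * P + 1 - P) = Y * (P * Q * P) + Y - Y * P := by noncomm_ring
    _ = (1 - P) * Q * P + Y - Y := by rw [e, hYP]
    _ = (1 - P) * Q * P := by abel
  exact ⟨hN1, hN2, hN3⟩

lemma aux_formula (P Q Y : H →L[ℂ] H)
    (hP : IsOrthogonalProjection P) (hQ : IsOrthogonalProjection Q)
    (hY : IsAngularOperator P Y) (hR : HasGraphRange P Y Q) :
    IsUnit (P * Q * P + 1 - P) ∧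
    Y = ((1 - P) * Q * P) * Ring.inverse (P * Q * P + 1 - P) := by
  obtain ⟨h1, h2, h3⟩ := aux_main P Q Y hP hQ hY hR
  let u : (H →L[ℂ] H)ˣ := ⟨P * Q * P + 1 - P, 1 + star Y * Y, h1, h2⟩
  have hu : IsUnit (P * Q * P + 1 - P) := ⟨u, rfl⟩
  refine ⟨hu, ?_⟩
  have hinv : Ring.inverse (P * Q * P + 1 - P) = 1 + star Y * Y :=
    Ring.inverse_unit u
  rw [hinv, ← h3, mul_assoc, h1, mul_one]

lemma g_contDiffAt (P Q₀ : H →L[ℂ] H) (hu : IsUnit (P * Q₀ * P + 1 - P)) :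
    ContDiffAt ℝ 1
      (fun Q : H →L[ℂ] H => ((1 - P) * Q * P) * Ring.inverse (P * Q * P + 1 - P)) Q₀ := by
  have h1 : ContDiff ℝ 1 (fun Q : H →L[ℂ] H => (1 - P) * Q * P) :=
    (contDiff_const.mul contDiff_id).mul contDiff_const
  have h2 : ContDiff ℝ 1 (fun Q : H →L[ℂ] H => P * Q * P + 1 - P) :=
    (((contDiff_const.mul contDiff_id).mul contDiff_const).add contDiff_const).sub contDiff_const
  have h3 : ContDiffAt ℝ 1 (fun Q : H →L[ℂ] H => Ring.inverse (P * Q * P + 1 - P)) Q₀ := by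
    have h4 : ContDiffAt ℝ 1 Ring.inverse ((P * Q₀ * P + 1 - P) : H →L[ℂ] H) := by
      have := contDiffAt_ringInverse ℝ (n := 1) hu.unit
      rwa [IsUnit.unit_spec] at this
    exact h4.comp Q₀ h2.contDiffAt
  exact h1.contDiffAt.mul h3

end Aux

/-- If `γ : [a,b] → 𝒫` is a piecewise `C¹`-smooth path of orthogonal
projections such that `Ran γ(t) = G(X_t)` for angular operators `X_t` for `γ(a)`, then
`t ↦ X_t` is `C¹`-smooth on every interval `J ⊆ [a,b]` on which `γ` is `C¹`-smooth; in
particular, `t ↦ X_t` is piecewise `C¹`-smooth on `[a,b]`. -/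
theorem angular_operator_smooth {H : Type*} [NormedAddCommGroup H] [InnerProductSpace ℂ H]
    [CompleteSpace H] [TopologicalSpace.SeparableSpace H]
    (a b : ℝ) (γ X : ℝ → (H →L[ℂ] H))
    (hproj : ∀ t ∈ Set.Icc a b, IsOrthogonalProjection (γ t))
    (hγ : PiecewiseC1On γ a b)
    (hX : ∀ t ∈ Set.Icc a b,
      IsAngularOperator (γ a) (X t) ∧ HasGraphRange (γ a) (X t) (γ t)) :
    (∀ J ⊆ Set.Icc a b, J.OrdConnected → ContDiffOn ℝ 1 γ J → ContDiffOn ℝ 1 X J) ∧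
      PiecewiseC1On X a b := by
  obtain ⟨n, t, ht0, htn, hlt, hsm⟩ := hγ
  have mono : ∀ d i, i + d ≤ n → t i ≤ t (i + d) := by
    intro d
    induction d with
    | zero => intro i _; simp
    | succ d ih =>
      intro i h
      have h1 : i + d < n := by omega
      have h3 : t i ≤ t (i + d + 1) :=
        le_trans (ih i (le_of_lt h1)) (le_of_lt (hlt (i + d) h1))
      simpa [← add_assoc] using h3
  have haleb : a ≤ b := by
    have := mono n 0 (by omega)
    simpa [ht0, htn] using this
  have ha : a ∈ Set.Icc a b := ⟨le_refl a, haleb⟩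
  set P := γ a with hPdef
  have key : ∀ s ∈ Set.Icc a b, IsUnit (P * γ s * P + 1 - P) ∧
      X s = ((1 - P) * γ s * P) * Ring.inverse (P * γ s * P + 1 - P) := by
    intro s hs
    obtain ⟨hang, hran⟩ := hX s hs
    exact aux_formula P (γ s) (X s) (hproj a ha) (hproj s hs) hang hran
  have part1 : ∀ J ⊆ Set.Icc a b, J.OrdConnected → ContDiffOn ℝ 1 γ J →
      ContDiffOn ℝ 1 X J := by
    intro J hJ _ hγJ x hx
    obtain ⟨hu, hXe⟩ := key x (hJ hx)
    have hg := g_contDiffAt P (γ x) hu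
    have hc := hg.comp_contDiffWithinAt x (hγJ x hx)
    exact hc.congr (fun y hy => (key y (hJ hy)).2) hXe
  refine ⟨part1, n, t, ht0, htn, hlt, ?_⟩
  intro i hi
  have hsub : Set.Icc (t i) (t (i + 1)) ⊆ Set.Icc a b := by
    intro x hx
    have hia : a ≤ t i := by
      have := mono i 0 (by omega)
      simpa [ht0] using this
    have hib : t (i + 1) ≤ b := by
      have := mono (n - (i + 1)) (i + 1) (by omega)
      rw [show i + 1 + (n - (i + 1)) = n by omega, htn] at this
      exact this
    exact ⟨le_trans hia hx.1, le_trans hx.2 hib⟩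
  exact part1 _ hsub Set.ordConnected_Icc (hsm i hi)
end

section
/- Let γ : [a,b] → 𝒫 be a piecewise C¹-smooth path of orthogonal projections such that for every t ∈ [a,b] there is an angular operator X_t for γ(a) with Ran γ(t) = G(X_t). Then for every interval J ⊂ [a,b] on which γ is C¹-smooth and every t ∈ J, the estimate ‖(d/dt) X_t‖ ≤ (1 + ‖X_t‖²) · ‖γ'(t)‖ holds. -/
open ContinuousLinearMap
open scoped ComplexInnerProductSpace

section Aux

variable {H : Type*} [NormedAddCommGroup H] [InnerProductSpace ℂ H] [CompleteSpace H]

/-- A self-adjoint idempotent is a contraction. -/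
lemma aux_proj_apply_norm_le (R : H →L[ℂ] H) (hR : IsSelfAdjoint R) (hRR : R * R = R)
    (h : H) : ‖R h‖ ≤ ‖h‖ := by
  have hadj : ∀ x y : H, ⟪R x, y⟫ = ⟪x, R y⟫ := by
    intro x y
    conv_lhs => rw [← hR.adjoint_eq]
    exact ContinuousLinearMap.adjoint_inner_left R y x
  have hRRa : R (R h) = R h := by
    have := congrArg (fun (T : H →L[ℂ] H) => T h) hRR
    simpa [ContinuousLinearMap.mul_apply] using this
  have h1 : ‖R h‖ ^ 2 = RCLike.re (⟪R h, R h⟫) := by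
    rw [inner_self_eq_norm_sq (𝕜 := ℂ)]
  have h2 : (⟪R h, R h⟫ : ℂ) = ⟪h, R h⟫ := by
    rw [hadj h (R h), hRRa]
  have h3 : RCLike.re (⟪h, R h⟫ : ℂ) ≤ ‖h‖ * ‖R h‖ := by
    calc RCLike.re (⟪h, R h⟫ : ℂ) ≤ ‖(⟪h, R h⟫ : ℂ)‖ := RCLike.re_le_norm _
      _ ≤ ‖h‖ * ‖R h‖ := norm_inner_le_norm _ _
  have h4 : ‖R h‖ ^ 2 ≤ ‖h‖ * ‖R h‖ := by rw [h1, h2]; exact h3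
  nlinarith [norm_nonneg (R h), norm_nonneg h]

/-- Key norm estimate: if `R` is an orthogonal projection and `Y = R⊥ Y R`, then
`‖R + Y‖ ≤ √(1 + ‖Y‖²)`. -/
lemma aux_norm_add_angular_le (R Y : H →L[ℂ] H) (hR : IsSelfAdjoint R) (hRR : R * R = R)
    (hY : Y = (1 - R) * Y * R) : ‖R + Y‖ ≤ Real.sqrt (1 + ‖Y‖ ^ 2) := by
  have hadj : ∀ x y : H, ⟪R x, y⟫ = ⟪x, R y⟫ := by
    intro x y
    conv_lhs => rw [← hR.adjoint_eq]
    exact ContinuousLinearMap.adjoint_inner_left R y x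
  have hz : R * (1 - R) = 0 := by rw [mul_sub, mul_one, hRR, sub_self]
  have hYRop : Y * R = Y := by
    conv_lhs => rw [hY]
    rw [mul_assoc ((1 - R) * Y) R R, hRR, ← hY]
  refine ContinuousLinearMap.opNorm_le_bound _ (Real.sqrt_nonneg _) fun h => ?_
  have hYh : Y h = (1 - R) (Y (R h)) := by
    conv_lhs => rw [hY]
    rfl
  have hRYh : R (Y h) = 0 := by
    rw [hYh]
    have h5 : R ((1 - R) (Y (R h))) = (R * (1 - R)) (Y (R h)) := rfl
    rw [h5, hz]
    rfl
  have horth : (⟪R h, Y h⟫ : ℂ) = 0 := by rw [hadj, hRYh, inner_zero_right]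
  have hpyth : ‖R h + Y h‖ * ‖R h + Y h‖ = ‖R h‖ * ‖R h‖ + ‖Y h‖ * ‖Y h‖ :=
    norm_add_sq_eq_norm_sq_add_norm_sq_of_inner_eq_zero _ _ horth
  have hYR : Y h = Y (R h) := by
    have h6 : Y (R h) = (Y * R) h := rfl
    rw [h6, hYRop]
  have hYb : ‖Y h‖ ≤ ‖Y‖ * ‖R h‖ := by rw [hYR]; exact Y.le_opNorm _
  have hRb : ‖R h‖ ≤ ‖h‖ := aux_proj_apply_norm_le R hR hRR h
  have hsq : ‖(R + Y) h‖ ^ 2 ≤ (1 + ‖Y‖ ^ 2) * ‖h‖ ^ 2 := by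
    have happ : (R + Y) h = R h + Y h := rfl
    rw [happ, sq, hpyth]
    have f1 : ‖R h‖ * ‖R h‖ ≤ ‖h‖ * ‖h‖ := mul_self_le_mul_self (norm_nonneg _) hRb
    have h1 : ‖Y h‖ * ‖Y h‖ ≤ (‖Y‖ * ‖R h‖) * (‖Y‖ * ‖R h‖) :=
      mul_self_le_mul_self (norm_nonneg _) hYb
    have f2 : ‖Y h‖ * ‖Y h‖ ≤ ‖Y‖ * ‖Y‖ * (‖h‖ * ‖h‖) := by
      refine h1.trans ?_
      have := mul_le_mul_of_nonneg_left f1 (mul_nonneg (norm_nonneg Y) (norm_nonneg Y))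
      nlinarith [this]
    nlinarith [f1, f2]
  have := Real.sqrt_le_sqrt hsq
  rwa [Real.sqrt_sq (norm_nonneg _), Real.sqrt_mul (by positivity) (‖h‖ ^ 2),
    Real.sqrt_sq (norm_nonneg _)] at this

end Aux

/-- If `γ : [a,b] → 𝒫` is a piecewise `C¹`-smooth path of orthogonal
projections with `Ran γ(t) = G(X_t)` for angular operators `X_t` for `γ(a)`, then on every
interval `J ⊆ [a,b]` on which `γ` is `C¹`-smooth one has
`‖(d/dt) X_t‖ ≤ (1 + ‖X_t‖²)·‖γ'(t)‖` for all `t ∈ J`. -/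
theorem angular_operator_derivative_bound {H : Type*} [NormedAddCommGroup H]
    [InnerProductSpace ℂ H] [CompleteSpace H] [TopologicalSpace.SeparableSpace H]
    (a b : ℝ) (γ X : ℝ → (H →L[ℂ] H))
    (hproj : ∀ t ∈ Set.Icc a b, IsOrthogonalProjection (γ t))
    (hγ : PiecewiseC1On γ a b)
    (hX : ∀ t ∈ Set.Icc a b,
      IsAngularOperator (γ a) (X t) ∧ HasGraphRange (γ a) (X t) (γ t)) :
    ∀ J ⊆ Set.Icc a b, J.OrdConnected → ContDiffOn ℝ 1 γ J →
      ∀ t ∈ J, ‖derivWithin X J t‖ ≤ (1 + ‖X t‖ ^ 2) * ‖derivWithin γ J t‖ := by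
  -- `a ≤ b`
  have hab : a ≤ b := by
    obtain ⟨n, tt, h0, hn, hlt, -⟩ := hγ
    have key : ∀ i, i ≤ n → tt 0 ≤ tt i := by
      intro i
      induction i with
      | zero => intro _; exact le_rfl
      | succ k ih =>
        intro hk
        exact (ih (Nat.le_of_succ_le hk)).trans (le_of_lt (hlt k (Nat.lt_of_succ_le hk)))
    rw [← h0, ← hn]; exact key n le_rfl
  have haI : a ∈ Set.Icc a b := ⟨le_rfl, hab⟩
  obtain ⟨hPsa, hPP⟩ := hproj a haI
  have hang : ∀ s ∈ Set.Icc a b, X s = (1 - γ a) * X s * γ a := fun s hs => (hX s hs).1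
  -- basic consequences of the angular operator property
  have hPmul : ∀ s ∈ Set.Icc a b, γ a * X s = 0 ∧ X s * γ a = X s := by
    intro s hs
    constructor
    · rw [hang s hs]
      have h7 : γ a * ((1 - γ a) * X s * γ a) = (γ a * (1 - γ a)) * X s * γ a := by
        noncomm_ring
      rw [h7, mul_sub, mul_one, hPP, sub_self, zero_mul, zero_mul]
    · conv_lhs => rw [hang s hs]
      rw [mul_assoc ((1 - γ a) * X s) (γ a) (γ a), hPP, ← hang s hs]
  have hXX : ∀ s ∈ Set.Icc a b, ∀ r ∈ Set.Icc a b, X s * X r = 0 := by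
    intro s hs r hr
    conv_lhs => rw [hang s hs, hang r hr]
    have h8 : (1 - γ a) * X s * γ a * ((1 - γ a) * X r * γ a)
        = (1 - γ a) * X s * (γ a * (1 - γ a)) * X r * γ a := by noncomm_ring
    rw [h8, mul_sub, mul_one, hPP, sub_self, mul_zero, zero_mul, zero_mul]
  -- identity (A):  γ s * (γ a + X s) = γ a + X s
  have idA : ∀ s ∈ Set.Icc a b, γ s * (γ a + X s) = γ a + X s := by
    intro s hs
    have hQQ := (hproj s hs).2
    have hrange : Set.range ⇑(γ s) = (fun u => u + X s u) '' Set.range ⇑(γ a) :=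
      (hX s hs).2
    ext h
    have hXsP : X s * γ a = X s := (hPmul s hs).2
    have hmem : (γ a + X s) h ∈ (fun u => u + X s u) '' Set.range ⇑(γ a) := by
      refine ⟨γ a h, ⟨h, rfl⟩, ?_⟩
      show γ a h + X s (γ a h) = (γ a + X s) h
      have h9 : X s (γ a h) = (X s * γ a) h := rfl
      rw [h9, hXsP]
      rfl
    rw [← hrange] at hmem
    obtain ⟨w, hw⟩ := hmem
    have h10 : (γ s * (γ a + X s)) h = γ s ((γ a + X s) h) := rfl
    rw [h10, ← hw]
    have h11 : γ s (γ s w) = (γ s * γ s) w := rfl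
    rw [h11, hQQ]
  -- identity (B):  (γ a + X s) * γ s = γ s
  have idB : ∀ s ∈ Set.Icc a b, (γ a + X s) * γ s = γ s := by
    intro s hs
    have hrange : Set.range ⇑(γ s) = (fun u => u + X s u) '' Set.range ⇑(γ a) :=
      (hX s hs).2
    have hPXs : γ a * X s = 0 := (hPmul s hs).1
    have hXsXs : X s * X s = 0 := hXX s hs s hs
    ext h
    have hmem : γ s h ∈ Set.range ⇑(γ s) := ⟨h, rfl⟩
    rw [hrange] at hmem
    obtain ⟨v, ⟨w, hw⟩, hv⟩ := hmem
    have hPv : γ a v = v := by rw [← hw, ← ContinuousLinearMap.mul_apply, hPP]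
    have happ : ((γ a + X s) * γ s) h = γ a (γ s h) + X s (γ s h) := rfl
    rw [happ, ← hv]
    show γ a (v + X s v) + X s (v + X s v) = (fun u => u + X s u) v
    have h1 : γ a (v + X s v) = v := by
      rw [map_add, hPv]
      have h12 : γ a (X s v) = (γ a * X s) v := rfl
      rw [h12, hPXs]
      simp
    have h2 : X s (v + X s v) = X s v := by
      rw [map_add]
      have h13 : X s (X s v) = (X s * X s) v := rfl
      rw [h13, hXsXs]
      simp
    rw [h1, h2]
  -- main part
  intro J hJsub hJoc hJc1 t ht
  have htI : t ∈ Set.Icc a b := hJsub ht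
  by_cases hiso : nhdsWithin t (J \ {t}) = ⊥
  · rw [derivWithin_zero_of_not_accPt (by rw [accPt_principal_iff_nhdsWithin, hiso]; exact fun h => h.ne rfl), norm_zero]
    positivity
  by_cases hdiff : DifferentiableWithinAt ℝ X J t
  swap
  · rw [derivWithin_zero_of_not_differentiableWithinAt hdiff, norm_zero]
    positivity
  -- unique differentiability
  have hU : UniqueDiffWithinAt ℝ J t := by
    have hne : (J \ {t}).Nonempty := by
      by_contra hemp
      rw [Set.not_nonempty_iff_eq_empty] at hemp
      rw [hemp] at hiso
      simp at hiso
    obtain ⟨s, hsJ, hst⟩ := hne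
    rcases lt_or_gt_of_ne (hst : s ≠ t) with hlt | hgt
    · have hsub : Set.Icc s t ⊆ J := hJoc.out hsJ ht
      exact (uniqueDiffOn_Icc hlt t ⟨le_of_lt hlt, le_rfl⟩).mono hsub
    · have hsub : Set.Icc t s ⊆ J := hJoc.out ht hsJ
      exact (uniqueDiffOn_Icc hgt t ⟨le_rfl, le_of_lt hgt⟩).mono hsub
  set X' : H →L[ℂ] H := derivWithin X J t with hX'def
  set Q' : H →L[ℂ] H := derivWithin γ J t with hQ'def
  have hXd : HasDerivWithinAt X X' J t := hdiff.hasDerivWithinAt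
  have hγd : HasDerivWithinAt γ Q' J t :=
    ((hJc1.differentiableOn one_ne_zero) t ht).hasDerivWithinAt
  -- e1 : X' = (1 - γ a) * X' * γ a
  have e1 : X' = (1 - γ a) * X' * γ a := by
    have hc : HasDerivWithinAt (fun s => (1 - γ a) * X s * γ a)
        ((1 - γ a) * X' * γ a) J t := by
      have h1 : HasDerivWithinAt (fun s => (1 - γ a) * X s) ((1 - γ a) * X') J t :=
        hXd.const_mul (1 - γ a)
      exact h1.mul_const (γ a)
    have hc' : HasDerivWithinAt X ((1 - γ a) * X' * γ a) J t :=
      hc.congr (fun s hs => hang s (hJsub hs)) (hang t htI)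
    exact (hXd.derivWithin hU).symm.trans (hc'.derivWithin hU)
  have hP1P : γ a * (1 - γ a) = 0 := by rw [mul_sub, mul_one, hPP, sub_self]
  have hPX' : γ a * X' = 0 := by
    have h14 : γ a * X' = (γ a * (1 - γ a)) * X' * γ a := by
      conv_lhs => rw [e1]
      noncomm_ring
    rw [h14, hP1P, zero_mul, zero_mul]
  have hXtX' : X t * X' = 0 := by
    have h15 : X t * X' = (1 - γ a) * X t * (γ a * (1 - γ a)) * X' * γ a := by
      conv_lhs => rw [hang t htI, e1]
      noncomm_ring
    rw [h15, hP1P, mul_zero, zero_mul, zero_mul]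
  -- derivative of fun s => γ a + X s
  have hPXd : HasDerivWithinAt (fun s => γ a + X s) X' J t := hXd.const_add (γ a)
  -- e2 : Q' * (γ a + X t) + γ t * X' = X'   (from differentiating identity (A))
  have e2 : Q' * (γ a + X t) + γ t * X' = X' := by
    have hm : HasDerivWithinAt (fun s => γ s * (γ a + X s))
        (Q' * (γ a + X t) + γ t * X') J t := hγd.mul hPXd
    have hm' : HasDerivWithinAt (fun s => γ a + X s)
        (Q' * (γ a + X t) + γ t * X') J t :=
      hm.congr (fun s hs => (idA s (hJsub hs)).symm) ((idA t htI).symm)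
    exact (hm'.derivWithin hU).symm.trans (hPXd.derivWithin hU)
  -- β : (γ a + X t) * γ t = γ t
  have hβ : (γ a + X t) * γ t = γ t := idB t htI
  -- key algebraic identity
  have key : X' = (1 - γ a - X t) * Q' * (γ a + X t) := by
    have hsub : Q' * (γ a + X t) = X' - γ t * X' := eq_sub_of_add_eq e2
    have hsplit : (1 - γ a - X t) * (X' - γ t * X')
        = (X' - γ a * X' - X t * X') - ((γ t - (γ a + X t) * γ t) * X') := by noncomm_ring
    rw [mul_assoc, hsub, hsplit, hPX', hXtX', hβ, sub_self, zero_mul, sub_zero,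
      sub_zero, sub_zero]
  -- norm estimates
  have hL1 : ‖γ a + X t‖ ≤ Real.sqrt (1 + ‖X t‖ ^ 2) :=
    aux_norm_add_angular_le (γ a) (X t) hPsa hPP (hang t htI)
  have hL2 : ‖1 - γ a - X t‖ ≤ Real.sqrt (1 + ‖X t‖ ^ 2) := by
    have h1Psa : IsSelfAdjoint ((1 : H →L[ℂ] H) - γ a) := (IsSelfAdjoint.one (R := H →L[ℂ] H)).sub hPsa
    have h1P1P : ((1 : H →L[ℂ] H) - γ a) * (1 - γ a) = 1 - γ a := by
      rw [mul_sub, mul_one, sub_mul, one_mul, hPP, sub_self, sub_zero]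
    have hstar : star ((1 : H →L[ℂ] H) - γ a - X t) = (1 - γ a) + (-(star (X t))) := by
      rw [star_sub, star_sub, star_one, hPsa.star_eq]
      abel
    have hYang : -(star (X t)) = (1 - (1 - γ a)) * (-(star (X t))) * (1 - γ a) := by
      have hstarXt : star (X t) = γ a * star (X t) * (1 - γ a) := by
        conv_lhs => rw [hang t htI]
        rw [star_mul, star_mul, hPsa.star_eq, h1Psa.star_eq]
        noncomm_ring
      rw [sub_sub_cancel]
      conv_lhs => rw [hstarXt]
      noncomm_ring
    have hmain := aux_norm_add_angular_le (1 - γ a) (-(star (X t))) h1Psa h1P1P hYang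
    rw [norm_neg, norm_star] at hmain
    calc ‖(1 : H →L[ℂ] H) - γ a - X t‖
        = ‖star ((1 : H →L[ℂ] H) - γ a - X t)‖ := (norm_star _).symm
      _ = ‖(1 - γ a) + (-(star (X t)))‖ := by rw [hstar]
      _ ≤ Real.sqrt (1 + ‖X t‖ ^ 2) := hmain
  -- put everything together
  calc ‖X'‖ = ‖(1 - γ a - X t) * Q' * (γ a + X t)‖ := by rw [key]
    _ ≤ ‖(1 - γ a - X t) * Q'‖ * ‖γ a + X t‖ := norm_mul_le _ _
    _ ≤ ‖1 - γ a - X t‖ * ‖Q'‖ * ‖γ a + X t‖ :=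
        mul_le_mul_of_nonneg_right (norm_mul_le _ _) (norm_nonneg _)
    _ ≤ (Real.sqrt (1 + ‖X t‖ ^ 2) * ‖Q'‖) * Real.sqrt (1 + ‖X t‖ ^ 2) := by
        apply mul_le_mul
        · exact mul_le_mul_of_nonneg_right hL2 (norm_nonneg _)
        · exact hL1
        · exact norm_nonneg _
        · positivity
    _ = (1 + ‖X t‖ ^ 2) * ‖Q'‖ := by
        rw [mul_comm _ (Real.sqrt _), ← mul_assoc, Real.mul_self_sqrt (by positivity)]
end

section
/- (Arcsine Law for continuous paths) Let γ : [a,b] → 𝒫 be a continuous path of orthogonal projections. Then arcsin(‖γ(b) − γ(a)‖) ≤ l(γ). -/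
open ContinuousLinearMap

namespace ArcsineAux

set_option linter.unusedSectionVars false

open Real

lemma arccos_anti {u v : ℝ} (h : u ≤ v) : Real.arccos v ≤ Real.arccos u := by
  simp only [Real.arccos_eq_pi_div_two_sub_arcsin]
  exact sub_le_sub_left (Real.monotone_arcsin h) _

variable {H : Type*} [NormedAddCommGroup H] [InnerProductSpace ℂ H] [CompleteSpace H]

local notation "⟪" x ", " y "⟫" => @inner ℂ _ _ x y

open RCLike

lemma sa_inner (P : H →L[ℂ] H) (hP : IsSelfAdjoint P) (x y : H) : ⟪P x, y⟫ = ⟪x, P y⟫ := by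
  conv_lhs => rw [← ContinuousLinearMap.isSelfAdjoint_iff'.1 hP]
  exact ContinuousLinearMap.adjoint_inner_left P y x

lemma idem_apply {P : H →L[ℂ] H} (hP : IsOrthogonalProjection P) (x : H) : P (P x) = P x := by
  have := congrArg (fun f : H →L[ℂ] H => f x) hP.2
  simpa [ContinuousLinearMap.mul_apply] using this

lemma one_sub_apply' (P : H →L[ℂ] H) (x : H) : (1 - P) x = x - P x := by
  simp [ContinuousLinearMap.sub_apply]

/-- Spherical triangle inequality for unit vectors. -/
lemma arccos_inner_triangle (x y z : H) (hx : ‖x‖ = 1) (hy : ‖y‖ = 1) (hz : ‖z‖ = 1) :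
    Real.arccos (re ⟪x, z⟫) ≤ Real.arccos (re ⟪x, y⟫) + Real.arccos (re ⟪y, z⟫) := by
  set c₁ : ℝ := re ⟪x, y⟫ with hc₁
  set c₂ : ℝ := re ⟪y, z⟫ with hc₂
  have habs : ∀ u v : H, ‖u‖ = 1 → ‖v‖ = 1 → |re ⟪u, v⟫| ≤ 1 := by
    intro u v hu hv
    calc |re ⟪u, v⟫| ≤ ‖⟪u, v⟫‖ := abs_re_le_norm _
      _ ≤ ‖u‖ * ‖v‖ := norm_inner_le_norm u v
      _ = 1 := by rw [hu, hv, mul_one]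
  have h1 := habs x y hx hy
  have h2 := habs y z hy hz
  by_cases hπ : π ≤ Real.arccos c₁ + Real.arccos c₂
  · exact le_trans (Real.arccos_le_pi _) hπ
  push_neg at hπ
  -- key estimate
  have hkey : Real.cos (Real.arccos c₁ + Real.arccos c₂) ≤ re ⟪x, z⟫ := by
    rw [Real.cos_add, Real.cos_arccos (by linarith [abs_le.1 h1]) (by linarith [abs_le.1 h1]),
      Real.cos_arccos (by linarith [abs_le.1 h2]) (by linarith [abs_le.1 h2]),
      Real.sin_arccos, Real.sin_arccos]
    set x' : H := x - (c₁ : ℂ) • y with hx'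
    set z' : H := z - (c₂ : ℂ) • y with hz'
    have hre_smul : ∀ (r : ℝ) (u v : H), re ⟪u, (r : ℂ) • v⟫ = r * re ⟪u, v⟫ := by
      intro r u v
      rw [inner_smul_right]
      exact RCLike.re_ofReal_mul r _
    have hre_smul' : ∀ (r : ℝ) (u v : H), re ⟪(r : ℂ) • u, v⟫ = r * re ⟪u, v⟫ := by
      intro r u v
      rw [inner_smul_left, Complex.conj_ofReal]
      exact RCLike.re_ofReal_mul r _
    have hnorm' : ∀ (c : ℝ) (u v : H), ‖u‖ = 1 → ‖v‖ = 1 → c = re ⟪u, v⟫ →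
        ‖u - (c : ℂ) • v‖ = Real.sqrt (1 - c ^ 2) := by
      intro c u v hu hv hc
      have hsq : ‖u - (c : ℂ) • v‖ ^ 2 = 1 - c ^ 2 := by
        rw [norm_sub_sq (𝕜 := ℂ), hre_smul, norm_smul, Complex.norm_real, hu, hv, ← hc,
          Real.norm_eq_abs]
        nlinarith [sq_abs c]
      rw [← hsq, Real.sqrt_sq (norm_nonneg _)]
    have hxn : ‖x'‖ = Real.sqrt (1 - c₁ ^ 2) := hnorm' c₁ x y hx hy hc₁
    have hzn : ‖z'‖ = Real.sqrt (1 - c₂ ^ 2) := hnorm' c₂ z y hz hy (by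
      rw [hc₂]; exact (inner_re_symm (𝕜 := ℂ) z y).symm)
    have hinner : re ⟪x', z'⟫ = re ⟪x, z⟫ - c₁ * c₂ := by
      have hyy : re ⟪y, y⟫ = 1 := by
        rw [inner_self_eq_norm_sq (𝕜 := ℂ), hy]; norm_num
      have hzy : re ⟪x, y⟫ = c₁ := hc₁.symm
      rw [hx', hz']
      simp only [inner_sub_left, inner_sub_right, inner_smul_left, inner_smul_right,
        Complex.conj_ofReal, map_sub, map_add, map_neg, RCLike.re_ofReal_mul, hyy]
      have hmul : ∀ (r : ℝ) (w : ℂ), re ((r : ℂ) * w) = r * re w := fun r w => by simp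
      simp only [map_sub, map_add, map_neg, hmul, hyy]
      rw [← hc₁, ← hc₂]
      ring
    have hCS : |re ⟪x', z'⟫| ≤ Real.sqrt (1 - c₁ ^ 2) * Real.sqrt (1 - c₂ ^ 2) := by
      calc |re ⟪x', z'⟫| ≤ ‖⟪x', z'⟫‖ := RCLike.abs_re_le_norm _
        _ ≤ ‖x'‖ * ‖z'‖ := norm_inner_le_norm _ _
        _ = _ := by rw [hxn, hzn]
    linarith [abs_le.1 hCS]
  calc Real.arccos (re ⟪x, z⟫) ≤ Real.arccos (Real.cos (Real.arccos c₁ + Real.arccos c₂)) :=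
        arccos_anti hkey
    _ = Real.arccos c₁ + Real.arccos c₂ := Real.arccos_cos
        (add_nonneg (Real.arccos_nonneg _) (Real.arccos_nonneg _)) hπ.le


lemma orth_inner {P : H →L[ℂ] H} (hP : IsOrthogonalProjection P) (x y : H) :
    ⟪P x, y - P y⟫ = 0 := by
  rw [sa_inner P hP.1, map_sub, idem_apply hP, sub_self, inner_zero_right]

lemma pyth {P : H →L[ℂ] H} (hP : IsOrthogonalProjection P) (x : H) :
    ‖P x‖ ^ 2 + ‖x - P x‖ ^ 2 = ‖x‖ ^ 2 := by
  have hx : x = P x + (x - P x) := by abel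
  have h := norm_add_sq (𝕜 := ℂ) (P x) (x - P x)
  rw [orth_inner hP x x] at h
  simp only [map_zero, mul_zero, add_zero] at h
  rw [← hx] at h
  linarith

lemma norm_P_apply_le {P : H →L[ℂ] H} (hP : IsOrthogonalProjection P) (x : H) :
    ‖P x‖ ≤ ‖x‖ := by
  have := pyth hP x
  nlinarith [norm_nonneg (P x), norm_nonneg x, sq_nonneg (‖x - P x‖)]

lemma isOP_compl {P : H →L[ℂ] H} (hP : IsOrthogonalProjection P) :
    IsOrthogonalProjection (1 - P) := by
  refine ⟨(IsSelfAdjoint.one _).sub hP.1, ?_⟩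
  rw [mul_sub, sub_mul, sub_mul, one_mul, mul_one, hP.2]
  abel

lemma decomp {P R : H →L[ℂ] H} (hP : IsOrthogonalProjection P)
    (x : H) : ‖(P - R) x‖ ^ 2 = ‖P ((1 - R) x)‖ ^ 2 + ‖(1 - P) (R x)‖ ^ 2 := by
  have hxeq : (P - R) x = P ((1 - R) x) - (1 - P) (R x) := by
    simp only [ContinuousLinearMap.sub_apply, ContinuousLinearMap.one_apply, map_sub]
    abel
  have horth : ⟪P ((1 - R) x), (1 - P) (R x)⟫ = 0 := by
    rw [one_sub_apply']
    exact orth_inner hP _ _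
  rw [hxeq, norm_sub_sq (𝕜 := ℂ), horth]
  simp

lemma norm_le_of_pointwise {P R : H →L[ℂ] H} (hP : IsOrthogonalProjection P)
    (hR : IsOrthogonalProjection R) {c : ℝ} (hc : 0 ≤ c)
    (h1 : ∀ x, ‖P ((1 - R) x)‖ ≤ c * ‖(1 - R) x‖)
    (h2 : ∀ x, ‖(1 - P) (R x)‖ ≤ c * ‖R x‖) : ‖P - R‖ ≤ c := by
  refine ContinuousLinearMap.opNorm_le_bound _ hc fun x => ?_
  have hd := decomp (R := R) hP x
  have hpy := pyth hR x
  have h1x := h1 x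
  have h2x := h2 x
  rw [one_sub_apply'] at h1x hd
  have hsq : ‖(P - R) x‖ ^ 2 ≤ (c * ‖x‖) ^ 2 := by
    have a1 : ‖P (x - R x)‖ ^ 2 ≤ (c * ‖x - R x‖) ^ 2 := by
      have := mul_self_le_mul_self (norm_nonneg _) h1x
      simpa [pow_two] using this
    have a2 : ‖(1 - P) (R x)‖ ^ 2 ≤ (c * ‖R x‖) ^ 2 := by
      have := mul_self_le_mul_self (norm_nonneg _) h2x
      simpa [pow_two] using this
    nlinarith [sq_nonneg c]
  have := Real.sqrt_le_sqrt hsq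
  rwa [Real.sqrt_sq (norm_nonneg _), Real.sqrt_sq (mul_nonneg hc (norm_nonneg x))] at this

lemma norm_diff_le_one {P Q : H →L[ℂ] H} (hP : IsOrthogonalProjection P)
    (hQ : IsOrthogonalProjection Q) : ‖P - Q‖ ≤ 1 := by
  refine norm_le_of_pointwise hP hQ zero_le_one (fun x => ?_) (fun x => ?_)
  · rw [one_mul]; exact norm_P_apply_le hP _
  · rw [one_mul]; exact norm_P_apply_le (isOP_compl hP) _

/-- `arccos ‖R x‖ = arcsin ‖(1-R) x‖` for unit `x`. -/
lemma arccos_norm_eq {R : H →L[ℂ] H} (hR : IsOrthogonalProjection R) (x : H)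
    (hx : ‖x‖ = 1) : Real.arccos ‖R x‖ = Real.arcsin ‖(1 - R) x‖ := by
  have hpy := pyth hR x
  rw [hx] at hpy
  rw [Real.arccos_eq_arcsin (norm_nonneg _)]
  congr 1
  rw [one_sub_apply']
  rw [show (1 : ℝ) - ‖R x‖ ^ 2 = ‖x - R x‖ ^ 2 by linarith, Real.sqrt_sq (norm_nonneg _)]

lemma step2 {R : H →L[ℂ] H} (hR : IsOrthogonalProjection R) (x y : H)
    (hx : ‖x‖ = 1) (hy : ‖y‖ = 1) :
    Real.arccos ‖R x‖ ≤ Real.arccos (re ⟪x, y⟫) + Real.arccos ‖R y‖ := by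
  by_cases hRy : R y = 0
  · rw [hRy]
    simp only [norm_zero, Real.arccos_zero]
    have h1 : Real.arccos ‖R x‖ ≤ π / 2 := Real.arccos_le_pi_div_two.2 (norm_nonneg _)
    linarith [Real.arccos_nonneg (re ⟪x, y⟫)]
  · set w : H := ((‖R y‖ : ℂ))⁻¹ • R y with hw
    have hRy' : (0:ℝ) < ‖R y‖ := norm_pos_iff.2 hRy
    have hw1 : ‖w‖ = 1 := by
      rw [hw, norm_smul]
      simp [norm_inv, hRy'.ne']
    have hRw : R w = w := by
      rw [hw, map_smul, idem_apply hR]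
    have hinner_w : ∀ v : H, re ⟪v, w⟫ = ‖R y‖⁻¹ * re ⟪v, R y⟫ := by
      intro v
      rw [hw, inner_smul_right]
      have : ((‖R y‖ : ℂ))⁻¹ = ((‖R y‖⁻¹ : ℝ) : ℂ) := by push_cast; ring
      rw [this]
      simp
    have key1 : re ⟪x, w⟫ ≤ ‖R x‖ := by
      have h1 : ⟪x, w⟫ = ⟪R x, w⟫ := by
        conv_lhs => rw [← hRw]
        rw [sa_inner R hR.1]
      rw [h1]
      calc re ⟪R x, w⟫ ≤ |re ⟪R x, w⟫| := le_abs_self _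
        _ ≤ ‖⟪R x, w⟫‖ := abs_re_le_norm _
        _ ≤ ‖R x‖ * ‖w‖ := norm_inner_le_norm _ _
        _ = ‖R x‖ := by rw [hw1, mul_one]
    have key2 : re ⟪y, w⟫ = ‖R y‖ := by
      rw [hinner_w]
      have h1 : ⟪y, R y⟫ = ⟪R y, R y⟫ := by
        conv_rhs => rw [sa_inner R hR.1, idem_apply hR]
      rw [h1, inner_self_eq_norm_sq (𝕜 := ℂ)]
      field_simp
    calc Real.arccos ‖R x‖ ≤ Real.arccos (re ⟪x, w⟫) := arccos_anti key1
      _ ≤ Real.arccos (re ⟪x, y⟫) + Real.arccos (re ⟪y, w⟫) :=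
          arccos_inner_triangle x y w hx hy hw1
      _ = Real.arccos (re ⟪x, y⟫) + Real.arccos ‖R y‖ := by rw [key2]


/-- Directional arcsine bound through an intermediate projection. -/
lemma step3 {P Q R : H →L[ℂ] H} (hP : IsOrthogonalProjection P)
    (hQ : IsOrthogonalProjection Q) (hR : IsOrthogonalProjection R) (x : H)
    (hx1 : ‖x‖ = 1) (hx : P x = x) :
    Real.arcsin ‖(1 - R) x‖ ≤ Real.arcsin ‖P - Q‖ + Real.arcsin ‖Q - R‖ := by
  rw [← arccos_norm_eq hR x hx1]
  have hβ : (0:ℝ) ≤ Real.arcsin ‖Q - R‖ := Real.arcsin_nonneg.2 (norm_nonneg _)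
  have hα : (0:ℝ) ≤ Real.arcsin ‖P - Q‖ := Real.arcsin_nonneg.2 (norm_nonneg _)
  have h1 : ‖(1 - Q) x‖ ≤ ‖P - Q‖ := by
    have : (1 - Q) x = (P - Q) x := by
      rw [one_sub_apply', ContinuousLinearMap.sub_apply, hx]
    rw [this]
    calc ‖(P - Q) x‖ ≤ ‖P - Q‖ * ‖x‖ := ContinuousLinearMap.le_opNorm _ _
      _ = ‖P - Q‖ := by rw [hx1, mul_one]
  have hpyQ := pyth hQ x
  rw [hx1] at hpyQ
  rw [← one_sub_apply'] at hpyQ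
  by_cases h0 : Q x = 0
  · have h2 : (1:ℝ) ≤ ‖(1 - Q) x‖ := by
      rw [one_sub_apply', h0, sub_zero, hx1]
    have h3 : (1:ℝ) ≤ ‖P - Q‖ := le_trans h2 h1
    have h4 : π / 2 ≤ Real.arcsin ‖P - Q‖ := by
      calc π / 2 = Real.arcsin 1 := Real.arcsin_one.symm
        _ ≤ Real.arcsin ‖P - Q‖ := Real.monotone_arcsin h3
    have h5 : Real.arccos ‖R x‖ ≤ π / 2 := Real.arccos_le_pi_div_two.2 (norm_nonneg _)
    linarith
  · set y : H := ((‖Q x‖ : ℂ))⁻¹ • Q x with hy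
    have hQx' : (0:ℝ) < ‖Q x‖ := norm_pos_iff.2 h0
    have hy1 : ‖y‖ = 1 := by
      rw [hy, norm_smul]
      simp [norm_inv, hQx'.ne']
    have hQy : Q y = y := by rw [hy, map_smul, idem_apply hQ]
    have key_xy : re ⟪x, y⟫ = ‖Q x‖ := by
      have hsc : re ⟪x, y⟫ = ‖Q x‖⁻¹ * re ⟪x, Q x⟫ := by
        rw [hy, inner_smul_right]
        have hc : ((‖Q x‖ : ℂ))⁻¹ = ((‖Q x‖⁻¹ : ℝ) : ℂ) := by push_cast; ring
        rw [hc]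
        simp
      have h1' : ⟪x, Q x⟫ = ⟪Q x, Q x⟫ := by
        conv_rhs => rw [sa_inner Q hQ.1, idem_apply hQ]
      rw [hsc, h1', inner_self_eq_norm_sq (𝕜 := ℂ)]
      field_simp
    have h2 : Real.arccos (re ⟪x, y⟫) ≤ Real.arcsin ‖P - Q‖ := by
      rw [key_xy]
      have hd1 : ‖P - Q‖ ≤ 1 := norm_diff_le_one hP hQ
      have hsq : Real.sqrt (1 - ‖P - Q‖ ^ 2) ≤ ‖Q x‖ := by
        have hb : ‖(1 - Q) x‖ ^ 2 ≤ ‖P - Q‖ ^ 2 := by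
          have := mul_self_le_mul_self (norm_nonneg _) h1
          simpa [pow_two] using this
        have : 1 - ‖P - Q‖ ^ 2 ≤ ‖Q x‖ ^ 2 := by linarith
        calc Real.sqrt (1 - ‖P - Q‖ ^ 2) ≤ Real.sqrt (‖Q x‖ ^ 2) := Real.sqrt_le_sqrt this
          _ = ‖Q x‖ := Real.sqrt_sq (norm_nonneg _)
      calc Real.arccos ‖Q x‖ ≤ Real.arccos (Real.sqrt (1 - ‖P - Q‖ ^ 2)) := arccos_anti hsq
        _ = Real.arccos (Real.cos (Real.arcsin ‖P - Q‖)) := by rw [Real.cos_arcsin]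
        _ = Real.arcsin ‖P - Q‖ := Real.arccos_cos hα
            (le_trans (Real.arcsin_le_pi_div_two _) (by linarith [Real.pi_pos]))
    have h3 : Real.arccos ‖R y‖ ≤ Real.arcsin ‖Q - R‖ := by
      rw [arccos_norm_eq hR y hy1]
      refine Real.monotone_arcsin ?_
      have : (1 - R) y = (Q - R) y := by
        rw [one_sub_apply', ContinuousLinearMap.sub_apply, hQy]
      rw [this]
      calc ‖(Q - R) y‖ ≤ ‖Q - R‖ * ‖y‖ := ContinuousLinearMap.le_opNorm _ _
        _ = ‖Q - R‖ := by rw [hy1, mul_one]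
    calc Real.arccos ‖R x‖ ≤ Real.arccos (re ⟪x, y⟫) + Real.arccos ‖R y‖ :=
          step2 hR x y hx1 hy1
      _ ≤ Real.arcsin ‖P - Q‖ + Real.arcsin ‖Q - R‖ := add_le_add h2 h3

lemma pointwise_bound {P Q R : H →L[ℂ] H} (hP : IsOrthogonalProjection P)
    (hQ : IsOrthogonalProjection Q) (hR : IsOrthogonalProjection R) {θ : ℝ}
    (hθ₁ : Real.arcsin ‖P - Q‖ + Real.arcsin ‖Q - R‖ ≤ θ) (hθ₂ : θ ≤ π / 2)
    (x : H) : ‖(1 - R) (P x)‖ ≤ Real.sin θ * ‖P x‖ := by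
  by_cases h0 : P x = 0
  · simp [h0]
  · set w : H := ((‖P x‖ : ℂ))⁻¹ • P x with hw
    have hPx' : (0:ℝ) < ‖P x‖ := norm_pos_iff.2 h0
    have hw1 : ‖w‖ = 1 := by
      rw [hw, norm_smul]
      simp [norm_inv, hPx'.ne']
    have hPw : P w = w := by rw [hw, map_smul, idem_apply hP]
    have hstep := step3 hP hQ hR w hw1 hPw
    have harc : Real.arcsin ‖(1 - R) w‖ ≤ θ := le_trans hstep hθ₁
    have hnorm1 : ‖(1 - R) w‖ ≤ 1 := by
      calc ‖(1 - R) w‖ ≤ ‖w‖ := norm_P_apply_le (isOP_compl hR) w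
        _ = 1 := hw1
    have hθ0 : 0 ≤ θ := le_trans (add_nonneg (Real.arcsin_nonneg.2 (norm_nonneg (P - Q)))
      (Real.arcsin_nonneg.2 (norm_nonneg (Q - R)))) hθ₁
    have hmem1 : ‖(1 - R) w‖ ∈ Set.Icc (-1 : ℝ) 1 :=
      ⟨by linarith [norm_nonneg ((1 - R) w)], hnorm1⟩
    have hmem2 : θ ∈ Set.Icc (-(π / 2)) (π / 2) := ⟨by linarith [Real.pi_pos], hθ₂⟩
    have hle : ‖(1 - R) w‖ ≤ Real.sin θ := (Real.arcsin_le_iff_le_sin hmem1 hmem2).1 harc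
    have hscale : (1 - R) (P x) = (‖P x‖ : ℂ) • (1 - R) w := by
      rw [hw, map_smul, smul_smul]
      rw [mul_inv_cancel₀ (by exact_mod_cast hPx'.ne'), one_smul]
    rw [hscale, norm_smul]
    simp only [Complex.norm_real, Real.norm_eq_abs, abs_of_nonneg (norm_nonneg (P x))]
    calc ‖P x‖ * ‖(1 - R) w‖ ≤ ‖P x‖ * Real.sin θ := by
          exact mul_le_mul_of_nonneg_left hle (norm_nonneg _)
      _ = Real.sin θ * ‖P x‖ := mul_comm _ _

/-- Triangle inequality for the arcsine metric on orthogonal projections. -/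
lemma arcsin_triangle {P Q R : H →L[ℂ] H} (hP : IsOrthogonalProjection P)
    (hQ : IsOrthogonalProjection Q) (hR : IsOrthogonalProjection R) :
    Real.arcsin ‖P - R‖ ≤ Real.arcsin ‖P - Q‖ + Real.arcsin ‖Q - R‖ := by
  set α := Real.arcsin ‖P - Q‖ with hαd
  set β := Real.arcsin ‖Q - R‖ with hβd
  have hα : 0 ≤ α := Real.arcsin_nonneg.2 (norm_nonneg _)
  have hβ : 0 ≤ β := Real.arcsin_nonneg.2 (norm_nonneg _)
  by_cases hbig : π / 2 ≤ α + β
  · exact le_trans (Real.arcsin_le_pi_div_two _) hbig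
  push_neg at hbig
  have hsin_nonneg : 0 ≤ Real.sin (α + β) :=
    Real.sin_nonneg_of_nonneg_of_le_pi (by linarith) (by linarith [Real.pi_pos])
  have h1 : ∀ x, ‖P ((1 - R) x)‖ ≤ Real.sin (α + β) * ‖(1 - R) x‖ := by
    intro x
    have hb := pointwise_bound (isOP_compl hR) (isOP_compl hQ) (isOP_compl hP)
      (θ := α + β) ?_ hbig.le x
    · rwa [sub_sub_cancel] at hb
    · have e1 : (1 - R) - (1 - Q) = Q - R := by abel
      have e2 : (1 - Q) - (1 - P) = P - Q := by abel
      rw [e1, e2]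
      linarith
  have h2 : ∀ x, ‖(1 - P) (R x)‖ ≤ Real.sin (α + β) * ‖R x‖ := by
    intro x
    refine pointwise_bound hR hQ hP (θ := α + β) ?_ hbig.le x
    rw [norm_sub_rev R Q, norm_sub_rev Q P]
    linarith
  have hnorm : ‖P - R‖ ≤ Real.sin (α + β) := norm_le_of_pointwise hP hR hsin_nonneg h1 h2
  calc Real.arcsin ‖P - R‖ ≤ Real.arcsin (Real.sin (α + β)) := Real.monotone_arcsin hnorm
    _ = α + β := Real.arcsin_sin (by linarith) hbig.le

/-- Chain inequality over a finite sequence of projections. -/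
lemma arcsin_chain (f : ℕ → (H →L[ℂ] H)) (n : ℕ)
    (hf : ∀ i, i ≤ n → IsOrthogonalProjection (f i)) :
    Real.arcsin ‖f n - f 0‖ ≤
      ∑ i ∈ Finset.range n, Real.arcsin ‖f (i + 1) - f i‖ := by
  induction n with
  | zero => simp
  | succ n ih =>
    have htri := arcsin_triangle (hf 0 (Nat.zero_le _)) (hf n (Nat.le_succ _))
      (hf (n + 1) le_rfl)
    rw [norm_sub_rev (f 0) (f n), norm_sub_rev (f 0) (f (n+1)),
      norm_sub_rev (f n) (f (n+1))] at htri
    have hih := ih fun i hi => hf i (le_trans hi (Nat.le_succ _))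
    rw [Finset.sum_range_succ]
    linarith

lemma arcsin_le_mul' {x s : ℝ} (hx0 : 0 ≤ x) (hxs : x ≤ s) (hs : s ≤ 1/2) :
    Real.arcsin x ≤ (1 + s ^ 2) * x := by
  rcases eq_or_lt_of_le hx0 with h | h
  · rw [← h, Real.arcsin_zero]; ring_nf; rfl
  have hs0 : 0 < s := lt_of_lt_of_le h hxs
  set t := Real.arcsin x with htd
  have ht0 : 0 < t := Real.arcsin_pos.2 h
  have hx1 : x ≤ 1 := by linarith
  have hsin1 : (3:ℝ)/4 < Real.sin 1 := by
    have := Real.sin_gt_sub_cube (by norm_num : (0:ℝ) < 1)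
    norm_num at this
    linarith
  have ht1 : t ≤ 1 := by
    have h1 : x ≤ Real.sin 1 := by linarith
    have := Real.monotone_arcsin h1
    rwa [Real.arcsin_sin (by linarith [Real.pi_pos]) (by linarith [Real.pi_gt_three])] at this
  have hxt : Real.sin t = x := Real.sin_arcsin (by linarith) hx1
  have hsin : t - t ^ 3 / 4 < x := by
    have := Real.sin_gt_sub_cube ht0
    rw [hxt] at this
    nlinarith [pow_pos ht0 3]
  have ht2' : t ^ 2 ≤ 1 := by nlinarith
  have hcube : t ^ 3 ≤ t := by nlinarith
  have h34 : (3:ℝ)/4 * t ≤ x := by linarith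
  have ht2 : t ^ 2 ≤ 2 * s ^ 2 := by nlinarith
  nlinarith [mul_nonneg ht0.le (sq_nonneg s), sq_nonneg s, mul_nonneg hs0.le hs0.le]

end ArcsineAux

open ArcsineAux in
/-- **Arcsine Law for continuous paths.** For a continuous path
`γ : [a,b] → 𝒫` of orthogonal projections, `arcsin ‖γ(b) − γ(a)‖ ≤ l(γ)`, where the length
`l(γ)` is the total variation of `γ` on `[a,b]`. -/
theorem arcsine_law_continuous {H : Type*} [NormedAddCommGroup H] [InnerProductSpace ℂ H]
    [CompleteSpace H] [TopologicalSpace.SeparableSpace H]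
    (a b : ℝ) (hab : a ≤ b) (γ : ℝ → (H →L[ℂ] H))
    (hproj : ∀ t ∈ Set.Icc a b, IsOrthogonalProjection (γ t))
    (hcont : ContinuousOn γ (Set.Icc a b)) :
    ENNReal.ofReal (Real.arcsin ‖γ b - γ a‖) ≤ eVariationOn γ (Set.Icc a b) := by
  classical
  by_cases htop : eVariationOn γ (Set.Icc a b) = ⊤
  · rw [htop]; exact le_top
  refine ENNReal.ofReal_le_of_le_toReal ?_
  set V : ℝ := (eVariationOn γ (Set.Icc a b)).toReal with hVd
  have hV0 : 0 ≤ V := ENNReal.toReal_nonneg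
  refine le_of_forall_pos_le_add fun ε hε => ?_
  -- choose the mesh size `s`
  set s : ℝ := min (1/2) (Real.sqrt (ε / (V + 1))) with hsd
  have hs0 : 0 < s := lt_min (by norm_num) (Real.sqrt_pos.2 (div_pos hε (by linarith)))
  have hs2 : s ≤ 1/2 := min_le_left _ _
  have hsq : s ^ 2 * (V + 1) ≤ ε := by
    have h1 : s ≤ Real.sqrt (ε / (V + 1)) := min_le_right _ _
    have h2 : s ^ 2 ≤ ε / (V + 1) := by
      have h3 := Real.sq_sqrt (le_of_lt (div_pos hε (by linarith : (0:ℝ) < V + 1)))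
      nlinarith [Real.sqrt_nonneg (ε / (V + 1))]
    calc s ^ 2 * (V + 1) ≤ (ε / (V + 1)) * (V + 1) :=
          mul_le_mul_of_nonneg_right h2 (by linarith)
      _ = ε := by field_simp
  -- uniform continuity gives a fine partition
  have huc := (isCompact_Icc (a := a) (b := b)).uniformContinuousOn_of_continuous hcont
  rw [Metric.uniformContinuousOn_iff] at huc
  obtain ⟨δ, hδ0, hδ⟩ := huc s hs0
  obtain ⟨m, hm⟩ := exists_nat_gt ((b - a) / δ)
  set n : ℕ := m + 1 with hnd
  have hn0 : (0:ℝ) < n := by positivity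
  have hmn : (b - a) / δ < n := lt_of_lt_of_le hm (by exact_mod_cast Nat.le_succ m)
  have hc : (b - a) / n < δ := by
    rw [div_lt_iff₀ hδ0] at hmn
    rw [div_lt_iff₀ hn0]
    linarith
  have hc0 : 0 ≤ (b - a) / n := div_nonneg (by linarith) hn0.le
  set u : ℕ → ℝ := fun i => a + (min i n : ℕ) * ((b - a) / n) with hud
  have hu0 : u 0 = a := by simp [hud]
  have hun : u n = b := by
    simp only [hud, min_self]
    field_simp
    ring
  have humono : Monotone u := by
    intro i j hij
    simp only [hud]
    have h1 : ((min i n : ℕ) : ℝ) ≤ ((min j n : ℕ) : ℝ) := by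
      exact_mod_cast min_le_min_right n hij
    nlinarith
  have humem : ∀ i, u i ∈ Set.Icc a b := by
    intro i
    constructor
    · simp only [hud]
      nlinarith [Nat.cast_nonneg (α := ℝ) (min i n)]
    · simp only [hud]
      have h1 : ((min i n : ℕ) : ℝ) ≤ (n : ℝ) := by
        exact_mod_cast Nat.min_le_right i n
      have h2 : ((min i n : ℕ) : ℝ) * ((b - a) / n) ≤ (n : ℝ) * ((b - a) / n) :=
        mul_le_mul_of_nonneg_right h1 hc0
      have h3 : (n : ℝ) * ((b - a) / n) = b - a := by field_simp
      linarith
  have hstep : ∀ i, dist (u (i + 1)) (u i) < δ := by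
    intro i
    have h1 : min i n ≤ min (i + 1) n := min_le_min_right n (Nat.le_succ i)
    have h2 : min (i + 1) n ≤ min i n + 1 := by
      rcases le_or_gt (i + 1) n with h | h
      · rw [min_eq_left h, min_eq_left (by omega)]
      · rw [min_eq_right (by omega)]
        omega
    have hdiff : u (i + 1) - u i = (((min (i + 1) n : ℕ) : ℝ) - ((min i n : ℕ) : ℝ))
        * ((b - a) / n) := by
      simp only [hud]; ring
    have h3 : (0:ℝ) ≤ ((min (i + 1) n : ℕ) : ℝ) - ((min i n : ℕ) : ℝ) := by
      have : ((min i n : ℕ) : ℝ) ≤ ((min (i + 1) n : ℕ) : ℝ) := by exact_mod_cast h1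
      linarith
    have h4 : ((min (i + 1) n : ℕ) : ℝ) - ((min i n : ℕ) : ℝ) ≤ 1 := by
      have : ((min (i + 1) n : ℕ) : ℝ) ≤ ((min i n : ℕ) : ℝ) + 1 := by exact_mod_cast h2
      linarith
    rw [Real.dist_eq, hdiff, abs_of_nonneg (mul_nonneg h3 hc0)]
    calc (((min (i + 1) n : ℕ) : ℝ) - ((min i n : ℕ) : ℝ)) * ((b - a) / n)
        ≤ 1 * ((b - a) / n) := mul_le_mul_of_nonneg_right h4 hc0
      _ = (b - a) / n := one_mul _
      _ < δ := hc
  -- chain the arcsine triangle inequality along the partition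
  have hch := arcsin_chain (fun i => γ (u i)) n (fun i _ => hproj (u i) (humem i))
  simp only [hu0, hun] at hch
  -- bound each term
  have hterm : ∀ i ∈ Finset.range n, Real.arcsin ‖γ (u (i + 1)) - γ (u i)‖ ≤
      (1 + s ^ 2) * ‖γ (u (i + 1)) - γ (u i)‖ := by
    intro i _
    have hdist : dist (γ (u (i + 1))) (γ (u i)) < s :=
      hδ (u (i + 1)) (humem (i + 1)) (u i) (humem i) (hstep i)
    rw [dist_eq_norm] at hdist
    exact arcsin_le_mul' (norm_nonneg _) hdist.le hs2
  have hsum1 : Real.arcsin ‖γ b - γ a‖ ≤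
      (1 + s ^ 2) * ∑ i ∈ Finset.range n, ‖γ (u (i + 1)) - γ (u i)‖ := by
    rw [Finset.mul_sum]
    exact le_trans hch (Finset.sum_le_sum hterm)
  -- the real sum is bounded by the variation
  have hsum2 : ∑ i ∈ Finset.range n, ‖γ (u (i + 1)) - γ (u i)‖ ≤ V := by
    have hsl := eVariationOn.sum_le (f := γ) (n := n) humono humem
    have heq : ∑ i ∈ Finset.range n, ‖γ (u (i + 1)) - γ (u i)‖ =
        (∑ i ∈ Finset.range n, edist (γ (u (i + 1))) (γ (u i))).toReal := by
      rw [ENNReal.toReal_sum (fun i _ => by rw [edist_dist]; exact ENNReal.ofReal_ne_top)]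
      refine Finset.sum_congr rfl fun i _ => ?_
      rw [edist_dist, ENNReal.toReal_ofReal dist_nonneg, dist_eq_norm]
    rw [heq, hVd]
    exact ENNReal.toReal_mono htop hsl
  have hsumnn : 0 ≤ ∑ i ∈ Finset.range n, ‖γ (u (i + 1)) - γ (u i)‖ :=
    Finset.sum_nonneg fun i _ => norm_nonneg _
  calc Real.arcsin ‖γ b - γ a‖
      ≤ (1 + s ^ 2) * ∑ i ∈ Finset.range n, ‖γ (u (i + 1)) - γ (u i)‖ := hsum1
    _ ≤ (1 + s ^ 2) * V := mul_le_mul_of_nonneg_left hsum2 (by positivity)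
    _ = V + s ^ 2 * V := by ring
    _ ≤ V + s ^ 2 * (V + 1) := by nlinarith [sq_nonneg s]
    _ ≤ V + ε := by linarith
end

section
/- For all real numbers d > 0 and v with 0 < v < d/2, the inequality sin( (π/4) · log( d / (d − 2v) ) ) < (π/2) · v / (d − v) holds. -/
set_option maxHeartbeats 1000000


open Real

private lemma aux_sub_cube_le_sin {x : ℝ} (hx : 0 ≤ x) : x - x ^ 3 / 6 ≤ Real.sin x := by
  have hder : ∀ y : ℝ, HasDerivAt (fun t => Real.sin t - (t - t ^ 3 / 6))
      (Real.cos y - (1 - y ^ 2 / 2)) y := by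
    intro y
    have h := (Real.hasDerivAt_sin y).sub
      ((hasDerivAt_id y).sub ((hasDerivAt_pow 3 y).div_const 6))
    refine h.congr_deriv ?_
    norm_num
    ring
  have hmono : Monotone (fun t => Real.sin t - (t - t ^ 3 / 6)) := by
    apply monotone_of_deriv_nonneg
    · exact fun y => (hder y).differentiableAt
    · intro y
      rw [(hder y).deriv]
      have := Real.one_sub_sq_div_two_le_cos (x := y)
      linarith
  have h0 := hmono hx
  simp at h0
  linarith

private lemma aux_cos_le {x : ℝ} (hx : 0 ≤ x) : Real.cos x ≤ 1 - x ^ 2 / 2 + x ^ 4 / 24 := by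
  have hder : ∀ y : ℝ, HasDerivAt (fun t => (1 - t ^ 2 / 2 + t ^ 4 / 24) - Real.cos t)
      ((Real.sin y - (y - y ^ 3 / 6))) y := by
    intro y
    have h := ((((hasDerivAt_pow 2 y).div_const 2).const_sub 1).add
      ((hasDerivAt_pow 4 y).div_const 24)).sub (Real.hasDerivAt_cos y)
    refine h.congr_deriv ?_
    norm_num
    ring
  have hmono : MonotoneOn (fun t => (1 - t ^ 2 / 2 + t ^ 4 / 24) - Real.cos t) (Set.Ici 0) := by
    apply monotoneOn_of_deriv_nonneg (convex_Ici 0)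
    · exact fun y _ => (hder y).differentiableAt.continuousAt.continuousWithinAt
    · exact fun y _ => (hder y).differentiableAt.differentiableWithinAt
    · intro y hy
      rw [interior_Ici] at hy
      rw [(hder y).deriv]
      have := aux_sub_cube_le_sin (le_of_lt hy)
      linarith
  have h0 := hmono (Set.self_mem_Ici) (Set.mem_Ici.mpr hx) hx
  simp at h0
  linarith

private lemma aux_sin_le {x : ℝ} (hx : 0 ≤ x) :
    Real.sin x ≤ x - x ^ 3 / 6 + x ^ 5 / 120 := by
  have hder : ∀ y : ℝ, HasDerivAt (fun t => (t - t ^ 3 / 6 + t ^ 5 / 120) - Real.sin t)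
      ((1 - y ^ 2 / 2 + y ^ 4 / 24) - Real.cos y) y := by
    intro y
    have h := (((hasDerivAt_id y).sub ((hasDerivAt_pow 3 y).div_const 6)).add
      ((hasDerivAt_pow 5 y).div_const 120)).sub (Real.hasDerivAt_sin y)
    refine h.congr_deriv ?_
    norm_num
    ring
  have hmono : MonotoneOn (fun t => (t - t ^ 3 / 6 + t ^ 5 / 120) - Real.sin t) (Set.Ici 0) := by
    apply monotoneOn_of_deriv_nonneg (convex_Ici 0)
    · exact fun y _ => (hder y).differentiableAt.continuousAt.continuousWithinAt
    · exact fun y _ => (hder y).differentiableAt.differentiableWithinAt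
    · intro y hy
      rw [interior_Ici] at hy
      rw [(hder y).deriv]
      have := aux_cos_le (le_of_lt hy)
      linarith
  have h0 := hmono (Set.self_mem_Ici) (Set.mem_Ici.mpr hx) hx
  simp at h0
  linarith

private lemma aux_exp_ge {x : ℝ} (hx : 0 ≤ x) :
    1 + x + x ^ 2 / 2 + x ^ 3 / 6 + x ^ 4 / 24 ≤ Real.exp x := by
  have h := Real.sum_le_exp_of_nonneg hx 5
  simp [Finset.sum_range_succ, Nat.factorial] at h
  linarith

/-- For all real `d > 0` and `0 < v < d/2`,
`sin((π/4)·log(d/(d−2v))) < (π/2)·v/(d−v)`. -/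
theorem arcsine_new_bound_lt_old_bound (d v : ℝ) (hd : 0 < d) (hv : 0 < v)
    (hvd : v < d / 2) :
    Real.sin ((π / 4) * Real.log (d / (d - 2 * v))) < (π / 2) * v / (d - v) := by
  have hw : 0 < d - 2 * v := by linarith
  have hdv : 0 < d - v := by linarith
  set w := d - 2 * v with hw_def
  set L := Real.log (d / w) with hL_def
  have hdw : 1 < d / w := by rw [lt_div_iff₀ hw]; linarith
  have hL0 : 0 < L := Real.log_pos hdw
  have hexp : Real.exp L = d / w := Real.exp_log (by positivity)
  have hdE : d = w * Real.exp L := by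
    rw [hexp]; field_simp
  have hpi1 : (3.141592 : ℝ) < π := Real.pi_gt_d6
  have hpi2 : π < 3.15 := by
    have := Real.pi_lt_d2
    linarith
  by_cases hL2 : L ≤ 2
  · -- small L case
    have hy : (0:ℝ) ≤ π / 4 * L := by positivity
    have h1 : Real.sin (π / 4 * L) ≤
        (π / 4 * L) - (π / 4 * L) ^ 3 / 6 + (π / 4 * L) ^ 5 / 120 := aux_sin_le hy
    have hpi3lo : (31.006 : ℝ) < π ^ 3 := by
      have h := pow_lt_pow_left₀ hpi1 (by norm_num) (n := 3) (by norm_num)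
      nlinarith [h]
    have hpi5hi : π ^ 5 < 311 := by
      have h := pow_lt_pow_left₀ hpi2 (by positivity : (0:ℝ) ≤ π) (n := 5) (by norm_num)
      nlinarith [h]
    have h2 : (π / 4 * L) - (π / 4 * L) ^ 3 / 6 + (π / 4 * L) ^ 5 / 120 <
        π / 2 * (L / 2 - L ^ 3 / 24) := by
      have hL3 : 0 < L ^ 3 := by positivity
      have hLsq : L ^ 2 ≤ 4 := by nlinarith
      have hL5 : L ^ 5 ≤ 4 * L ^ 3 := by
        calc L ^ 5 = L ^ 3 * L ^ 2 := by ring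
          _ ≤ L ^ 3 * 4 := mul_le_mul_of_nonneg_left hLsq hL3.le
          _ = 4 * L ^ 3 := by ring
      nlinarith [mul_pos hL3 (show (0:ℝ) < π ^ 3 - 31.006 by linarith),
        mul_le_mul_of_nonneg_left hL5 (show (0:ℝ) ≤ π ^ 5 by positivity),
        mul_lt_mul_of_pos_left hpi5hi (show (0:ℝ) < L ^ 3 by positivity)]
    have hkey : L / 2 - L ^ 3 / 24 ≤ v / (d - v) := by
      rw [le_div_iff₀ hdv]
      · have hc : (0:ℝ) ≤ 24 - 12 * L + L ^ 3 := by nlinarith [pow_nonneg hL0.le 3]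
        have hE := aux_exp_ge hL0.le
        have hmul := mul_le_mul_of_nonneg_right hE hc
        have hL6 : (0:ℝ) ≤ L ^ 6 := by positivity
        have hL7 : (0:ℝ) ≤ L ^ 7 := by positivity
        have hwE : w * ((1 + L + L ^ 2 / 2 + L ^ 3 / 6 + L ^ 4 / 24) * (24 - 12 * L + L ^ 3))
            ≤ w * (Real.exp L * (24 - 12 * L + L ^ 3)) :=
          mul_le_mul_of_nonneg_left hmul hw.le
        have hv_eq : v = (d - w) / 2 := by rw [hw_def]; ring
        have hdv_eq : d - v = (d + w) / 2 := by rw [hw_def]; ring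
        have h24 : w * (24 + 12 * L - L ^ 3 + L ^ 6 / 6 + L ^ 7 / 24)
            ≤ d * (24 - 12 * L + L ^ 3) := by
          calc w * (24 + 12 * L - L ^ 3 + L ^ 6 / 6 + L ^ 7 / 24)
              = w * ((1 + L + L ^ 2 / 2 + L ^ 3 / 6 + L ^ 4 / 24) * (24 - 12 * L + L ^ 3)) := by
                ring
            _ ≤ w * (Real.exp L * (24 - 12 * L + L ^ 3)) := hwE
            _ = d * (24 - 12 * L + L ^ 3) := by rw [hdE]; ring
        rw [hdv_eq, hv_eq]
        nlinarith [h24, mul_nonneg hw.le hL6, mul_nonneg hw.le hL7]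
    have h3 : π / 2 * (L / 2 - L ^ 3 / 24) ≤ π / 2 * (v / (d - v)) :=
      mul_le_mul_of_nonneg_left hkey (by positivity)
    have hfin : π / 2 * (v / (d - v)) = π / 2 * v / (d - v) := by ring
    calc Real.sin (π / 4 * L) ≤ _ := h1
      _ < π / 2 * (L / 2 - L ^ 3 / 24) := h2
      _ ≤ π / 2 * (v / (d - v)) := h3
      _ = π / 2 * v / (d - v) := hfin
  · -- large L case: sin ≤ 1 < RHS
    push_neg at hL2
    have he1 : (2.7182818283 : ℝ) < Real.exp 1 := Real.exp_one_gt_d9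
    have h27 : (2.7 : ℝ) < Real.exp 1 := by linarith
    have he2 : (7.2 : ℝ) < Real.exp 2 := by
      have hsq : Real.exp 2 = Real.exp 1 * Real.exp 1 := by
        rw [← Real.exp_add]; norm_num
      rw [hsq]
      calc (7.2 : ℝ) < 2.7 * 2.7 := by norm_num
        _ < Real.exp 1 * Real.exp 1 := mul_lt_mul'' h27 h27 (by norm_num) (by norm_num)
    have hE2 : Real.exp 2 < Real.exp L := Real.exp_lt_exp.mpr hL2
    have hdw7 : 7.2 * w < d := by
      have : (7.2 : ℝ) < d / w := by rw [← hexp]; linarith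
      rw [lt_div_iff₀ hw] at this
      exact this
    have hrhs : 1 < π / 2 * v / (d - v) := by
      rw [lt_div_iff₀ hdv]
      have hπv : 0 ≤ (π - 3.141592) * v := mul_nonneg (by linarith) hv.le
      rw [hw_def] at hdw7
      linarith
    exact lt_of_le_of_lt (Real.sin_le_one _) hrhs
end

section
/- For every real t with 0 < t < √3/2, the inequality sin( (π/2) ∫_0^t (2 − √(1 + 4τ²))^{−1} dτ ) < π t / (3 − √(1 + 4t²)) holds. -/
open Real

set_option maxHeartbeats 1000000 in
/-- Pointwise bound: `(2 - √(1+4τ²))⁻¹ ≤ 1 + 2τ² + 2τ⁴ + 6τ⁶` for `0 ≤ τ ≤ 0.51`. -/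
lemma aux_f_le_offdiag (τ : ℝ) (h0 : 0 ≤ τ) (h1 : τ ≤ 0.51) :
    (2 - Real.sqrt (1 + 4 * τ ^ 2))⁻¹ ≤ 1 + 2*τ^2 + 2*τ^4 + 6*τ^6 := by
  set s := Real.sqrt (1 + 4 * τ ^ 2) with hs
  have hs0 : 0 ≤ s := Real.sqrt_nonneg _
  have hs2 : s ^ 2 = 1 + 4 * τ ^ 2 := Real.sq_sqrt (by positivity)
  have h2 : τ^2 ≤ 0.2601 := by nlinarith
  have h4 : τ^4 ≤ 0.06765201 := by nlinarith [sq_nonneg τ, sq_nonneg (τ^2 - 0.2601)]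
  have h8 : τ^8 ≤ 0.06765201^2 := by
    nlinarith [pow_nonneg (sq_nonneg τ) 2, mul_le_mul h4 h4 (by positivity) (by norm_num)]
  have hslt : s < 2 := by
    rw [hs, show (2:ℝ) = Real.sqrt 4 by
      rw [show (4:ℝ) = 2^2 by norm_num, Real.sqrt_sq (by norm_num)]]
    apply Real.sqrt_lt_sqrt (by positivity)
    nlinarith
  have h2s : 0 < 2 - s := by linarith
  have key : 0 ≤ τ^6 * (1 - 10*τ^4 - 36*τ^8) :=
    mul_nonneg (pow_nonneg h0 6) (by nlinarith)
  have hssq : ((1+2*τ^2+2*τ^4+6*τ^6)*s)^2 = (1+2*τ^2+2*τ^4+6*τ^6)^2 * (1+4*τ^2) := by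
    rw [mul_pow, hs2]
  have hA : ((1+2*τ^2+2*τ^4+6*τ^6)*s)^2 ≤ (2*(1+2*τ^2+2*τ^4+6*τ^6) - 1)^2 := by
    rw [hssq]; nlinarith [key, pow_nonneg h0 8, pow_nonneg h0 12]
  have hq0 : (0:ℝ) ≤ (1+2*τ^2+2*τ^4+6*τ^6) * s := by positivity
  have hqs : (1+2*τ^2+2*τ^4+6*τ^6)*s ≤ 2*(1+2*τ^2+2*τ^4+6*τ^6) - 1 := by
    have hr0 : (0:ℝ) ≤ 2*(1+2*τ^2+2*τ^4+6*τ^6) - 1 := by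
      nlinarith [pow_nonneg h0 2, pow_nonneg h0 4, pow_nonneg h0 6]
    have := (pow_le_pow_iff_left₀ hq0 hr0 (two_ne_zero)).mp hA
    linarith
  rw [inv_eq_one_div, div_le_iff₀ h2s]
  nlinarith [hqs]

set_option maxHeartbeats 1000000 in
/-- Integrated bound: `t + (2/3)t³ + (2/5)t⁵ + (6/7)t⁷ ≤ 2t/(3-√(1+4t²))` for `0 < t ≤ 0.51`. -/
lemma aux_P_le_offdiag (t : ℝ) (h0 : 0 < t) (h1 : t ≤ 0.51) :
    t + 2/3*t^3 + 2/5*t^5 + 6/7*t^7 ≤ 2*t / (3 - Real.sqrt (1 + 4*t^2)) := by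
  have h0' : (0:ℝ) ≤ t := le_of_lt h0
  set s := Real.sqrt (1 + 4 * t ^ 2) with hs
  have hs0 : 0 ≤ s := Real.sqrt_nonneg _
  have hs2 : s ^ 2 = 1 + 4 * t ^ 2 := Real.sq_sqrt (by positivity)
  have h2 : t^2 ≤ 0.2601 := by nlinarith
  have h4 : t^4 ≤ 0.2601^2 := by nlinarith [sq_nonneg t, sq_nonneg (t^2 - 0.2601)]
  have m6 : t^4 * t^2 ≤ 0.2601^2 * 0.2601 :=
    mul_le_mul h4 h2 (sq_nonneg t) (by norm_num)
  have h6 : t^6 ≤ 0.2601^3 := by nlinarith [m6]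
  have m8 : t^6 * t^2 ≤ 0.2601^3 * 0.2601 :=
    mul_le_mul h6 h2 (sq_nonneg t) (by norm_num)
  have h8 : t^8 ≤ 0.2601^4 := by nlinarith [m8]
  have m10 : t^8 * t^2 ≤ 0.2601^4 * 0.2601 :=
    mul_le_mul h8 h2 (sq_nonneg t) (by norm_num)
  have h10 : t^10 ≤ 0.2601^5 := by nlinarith [m10]
  have hslt : s < 2 := by
    rw [hs, show (2:ℝ) = Real.sqrt 4 by
      rw [show (4:ℝ) = 2^2 by norm_num, Real.sqrt_sq (by norm_num)]]
    apply Real.sqrt_lt_sqrt (by positivity)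
    nlinarith
  have h3s : 0 < 3 - s := by linarith
  set P : ℝ := t + 2/3*t^3 + 2/5*t^5 + 6/7*t^7 with hP
  have hP0 : 0 < P := by rw [hP]; positivity
  have hR0 : 0 ≤ 3*P - 2*t := by
    rw [hP]; nlinarith [pow_nonneg h0' 3, pow_nonneg h0' 5, pow_nonneg h0' 7]
  have t4nn : (0:ℝ) ≤ t^4 := pow_nonneg h0' 4
  have hB : (3*P - 2*t)^2 ≤ (P*s)^2 := by
    have hPs : (P*s)^2 = P^2 * (1 + 4*t^2) := by rw [mul_pow, hs2]
    rw [hPs, hP]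
    nlinarith [mul_nonneg (sub_nonneg.2 h4) t4nn, mul_nonneg (sub_nonneg.2 h6) t4nn,
      mul_nonneg (sub_nonneg.2 h8) t4nn, mul_nonneg (sub_nonneg.2 h10) t4nn,
      pow_nonneg h0' 16, pow_nonneg h0' 6, t4nn]
  have hqs : 3*P - 2*t ≤ P*s :=
    (pow_le_pow_iff_left₀ hR0 (mul_nonneg hP0.le hs0) (two_ne_zero)).mp hB
  rw [le_div_iff₀ h3s]
  nlinarith [hqs]

/-- The polynomial integral. -/
lemma aux_int_poly_offdiag (t : ℝ) :
    (∫ τ in (0:ℝ)..t, (1 + 2*τ^2 + 2*τ^4 + 6*τ^6))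
      = t + 2/3*t^3 + 2/5*t^5 + 6/7*t^7 := by
  have h : ∀ x ∈ Set.uIcc (0:ℝ) t,
      HasDerivAt (fun y : ℝ => y + 2/3*y^3 + 2/5*y^5 + 6/7*y^7)
        (1 + 2*x^2 + 2*x^4 + 6*x^6) x := by
    intro x _
    have h1 : HasDerivAt (fun y : ℝ => y + 2/3*y^3 + 2/5*y^5 + 6/7*y^7)
        (1 + 2/3*(3*x^2) + 2/5*(5*x^4) + 6/7*(7*x^6)) x := by
      exact ((((hasDerivAt_id x).add
        (((hasDerivAt_pow 3 x)).const_mul (2/3:ℝ))).add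
        (((hasDerivAt_pow 5 x)).const_mul (2/5:ℝ))).add
        (((hasDerivAt_pow 7 x)).const_mul (6/7:ℝ))).congr_deriv (by push_cast; ring)
    convert h1 using 1; ring
  rw [intervalIntegral.integral_eq_sub_of_hasDerivAt h
    ((Continuous.intervalIntegrable (by continuity) 0 t))]
  ring

/-- For every `0 < t < √3/2`,
`sin((π/2)·∫_0^t (2 − √(1+4τ²))⁻¹ dτ) < π t/(3 − √(1+4t²))`. -/
theorem offdiag_new_bound_lt_old_bound (t : ℝ) (ht : 0 < t)
    (ht' : t < Real.sqrt 3 / 2) :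
    Real.sin ((π / 2) * ∫ τ in (0:ℝ)..t, (2 - Real.sqrt (1 + 4 * τ ^ 2))⁻¹)
      < π * t / (3 - Real.sqrt (1 + 4 * t ^ 2)) := by
  have ht2 : t^2 < 3/4 := by
    have h2t : 2*t < Real.sqrt 3 := by linarith
    have := (Real.lt_sqrt (by positivity : (0:ℝ) ≤ 2*t)).mp h2t
    nlinarith
  have hslt : Real.sqrt (1 + 4 * t ^ 2) < 2 := by
    rw [show (2:ℝ) = Real.sqrt 4 by
      rw [show (4:ℝ) = 2^2 by norm_num, Real.sqrt_sq (by norm_num)]]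
    exact Real.sqrt_lt_sqrt (by positivity) (by nlinarith)
  have hs0 : 0 ≤ Real.sqrt (1 + 4 * t ^ 2) := Real.sqrt_nonneg _
  have h3s : 0 < 3 - Real.sqrt (1 + 4 * t ^ 2) := by linarith
  have hcont : ContinuousOn (fun τ : ℝ => (2 - Real.sqrt (1 + 4 * τ ^ 2))⁻¹)
      (Set.uIcc 0 t) := by
    apply ContinuousOn.inv₀
    · fun_prop
    · intro x hx
      rw [Set.uIcc_of_le ht.le] at hx
      have hx2 : x^2 < 3/4 := by nlinarith [hx.1, hx.2]
      have hxs : Real.sqrt (1 + 4 * x ^ 2) < 2 := by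
        rw [show (2:ℝ) = Real.sqrt 4 by
          rw [show (4:ℝ) = 2^2 by norm_num, Real.sqrt_sq (by norm_num)]]
        exact Real.sqrt_lt_sqrt (by positivity) (by nlinarith)
      intro hc
      rw [sub_eq_zero] at hc
      linarith [hc ▸ hxs]
  have hint : IntervalIntegrable (fun τ : ℝ => (2 - Real.sqrt (1 + 4 * τ ^ 2))⁻¹)
      MeasureTheory.volume 0 t := hcont.intervalIntegrable
  set I := ∫ τ in (0:ℝ)..t, (2 - Real.sqrt (1 + 4 * τ ^ 2))⁻¹ with hI
  have hIpos : 0 < I := by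
    rw [hI]
    apply intervalIntegral.intervalIntegral_pos_of_pos_on hint _ ht
    intro x hx
    have hx2 : x^2 < 3/4 := by nlinarith [hx.1, hx.2]
    have hxs : Real.sqrt (1 + 4 * x ^ 2) < 2 := by
      rw [show (2:ℝ) = Real.sqrt 4 by
        rw [show (4:ℝ) = 2^2 by norm_num, Real.sqrt_sq (by norm_num)]]
      exact Real.sqrt_lt_sqrt (by positivity) (by nlinarith)
    have h2 : (0:ℝ) < 2 - Real.sqrt (1 + 4 * x ^ 2) := by linarith
    positivity
  by_cases h51 : t ≤ 0.51
  · -- small t : sin x < x and x ≤ π t/(3-s)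
    have hIle : I ≤ t + 2/3*t^3 + 2/5*t^5 + 6/7*t^7 := by
      rw [hI, ← aux_int_poly_offdiag t]
      apply intervalIntegral.integral_mono_on ht.le hint
        (Continuous.intervalIntegrable (by continuity) 0 t)
      intro x hx
      exact aux_f_le_offdiag x hx.1 (hx.2.trans h51)
    have hsin : Real.sin ((π/2) * I) < (π/2) * I :=
      Real.sin_lt (by positivity)
    have hstep : (π/2) * I ≤ (π/2) * (t + 2/3*t^3 + 2/5*t^5 + 6/7*t^7) := by
      apply mul_le_mul_of_nonneg_left hIle (by positivity)
    have hP : t + 2/3*t^3 + 2/5*t^5 + 6/7*t^7 ≤ 2*t / (3 - Real.sqrt (1 + 4*t^2)) :=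
      aux_P_le_offdiag t ht h51
    have hfin : (π/2) * (t + 2/3*t^3 + 2/5*t^5 + 6/7*t^7)
        ≤ π * t / (3 - Real.sqrt (1 + 4 * t ^ 2)) := by
      have := mul_le_mul_of_nonneg_left hP (by positivity : (0:ℝ) ≤ π/2)
      calc (π/2) * (t + 2/3*t^3 + 2/5*t^5 + 6/7*t^7)
          ≤ (π/2) * (2*t / (3 - Real.sqrt (1 + 4*t^2))) := this
        _ = π * t / (3 - Real.sqrt (1 + 4 * t ^ 2)) := by
            rw [show (1 + 4*t^2) = 1 + 4 * t ^ 2 by ring]; ring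
    linarith
  · -- large t : sin ≤ 1 < π t/(3-s)
    push_neg at h51
    have hs2 : (Real.sqrt (1 + 4 * t ^ 2)) ^ 2 = 1 + 4 * t ^ 2 :=
      Real.sq_sqrt (by positivity)
    have hsgt : 1.42 < Real.sqrt (1 + 4 * t ^ 2) := by nlinarith
    have hpi : 3.141592 < π := Real.pi_gt_d6
    have hpt : 1.602 < π * t := by nlinarith
    have h1lt : 1 < π * t / (3 - Real.sqrt (1 + 4 * t ^ 2)) := by
      rw [lt_div_iff₀ h3s]; linarith
    exact lt_of_le_of_lt (Real.sin_le_one _) h1lt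
end

section
/- Let H = L²((−1,1), ℂ), let P be the orthogonal projection onto the closed linear span of the even harmonics { x ↦ e^{2πikx} : k ∈ ℤ }, and let x̂ be the bounded self-adjoint multiplication operator (x̂ f)(x) = x·f(x). Then the commutator satisfies ‖2x̂P − P(2x̂)‖ = 1, i.e., ‖x̂P − Px̂‖ = 1/2. -/
open MeasureTheory ContinuousLinearMap Set Submodule
open scoped Real InnerProductSpace

/-- Lebesgue measure restricted to the interval `(-1, 1)`. -/
noncomputable def volIoo : Measure ℝ := volume.restrict (Set.Ioo (-1 : ℝ) 1)
/-- The Hilbert space `L²((-1,1), ℂ)`. -/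
noncomputable abbrev L2Ioo := Lp ℂ 2 volIoo

/-- The closed linear span of the even harmonics `x ↦ e^{2πikx}`, `k ∈ ℤ`,
in `L²((-1,1), ℂ)`. -/
noncomputable def evenHarmonics : Submodule ℂ L2Ioo :=
  (Submodule.span ℂ {g : L2Ioo | ∃ k : ℤ,
    (g : ℝ → ℂ) =ᵐ[volIoo]
      fun x => Complex.exp (((2 * π * (k : ℝ) * x : ℝ) : ℂ) * Complex.I)}).topologicalClosure

/-- translation by 1 mod 2 on (-1,1) -/
noncomputable def tau : ℝ → ℝ := fun x => if x < 0 then x + 1 else x - 1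

lemma tau_meas : Measurable tau := by
  unfold tau
  exact Measurable.ite (measurableSet_lt measurable_id measurable_const)
    (measurable_id.add_const 1) (measurable_id.sub_const 1)

lemma volIoo_eq_Ico : volIoo = volume.restrict (Set.Ico (-1 : ℝ) 1) :=
  Measure.restrict_congr_set Ioo_ae_eq_Ico

lemma volIoo_eq_Ioc : volIoo = volume.restrict (Set.Ioc (-1 : ℝ) 1) :=
  Measure.restrict_congr_set Ioo_ae_eq_Ioc

lemma tau_mp : MeasurePreserving tau volIoo volIoo := by
  constructor
  · exact tau_meas
  · have h1 : MeasurePreserving (fun x : ℝ => x + 1) volume volume :=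
      measurePreserving_add_right volume 1
    have h2 : MeasurePreserving (fun x : ℝ => x - 1) volume volume :=
      measurePreserving_sub_right volume 1
    have e1 : (fun x : ℝ => x + 1) ⁻¹' Ico (0:ℝ) 1 = Ico (-1 : ℝ) 0 := by
      ext x; simp only [Set.mem_preimage, Set.mem_Ico]; constructor <;> (intro h; exact ⟨by linarith [h.1], by linarith [h.2]⟩)
    have e2 : (fun x : ℝ => x - 1) ⁻¹' Ico (-1:ℝ) 0 = Ico (0 : ℝ) 1 := by
      ext x; simp only [Set.mem_preimage, Set.mem_Ico]; constructor <;> (intro h; exact ⟨by linarith [h.1], by linarith [h.2]⟩)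
    have m1 : MeasurePreserving (fun x : ℝ => x + 1)
        (volume.restrict (Ico (-1:ℝ) 0)) (volume.restrict (Ico (0:ℝ) 1)) := by
      have := h1.restrict_preimage (measurableSet_Ico (a := (0:ℝ)) (b := 1))
      rwa [e1] at this
    have m2 : MeasurePreserving (fun x : ℝ => x - 1)
        (volume.restrict (Ico (0:ℝ) 1)) (volume.restrict (Ico (-1:ℝ) 0)) := by
      have := h2.restrict_preimage (measurableSet_Ico (a := (-1:ℝ)) (b := 0))
      rwa [e2] at this
    have hsplit : volIoo = volume.restrict (Ico (-1:ℝ) 0) + volume.restrict (Ico (0:ℝ) 1) := by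
      rw [volIoo_eq_Ico, ← Set.Ico_union_Ico_eq_Ico (by norm_num : (-1:ℝ) ≤ 0) (by norm_num : (0:ℝ) ≤ 1)]
      exact Measure.restrict_union (Set.Ico_disjoint_Ico_same) measurableSet_Ico
    have key1 : Measure.map tau (volume.restrict (Ico (-1:ℝ) 0)) = volume.restrict (Ico (0:ℝ) 1) := by
      rw [← m1.map_eq]
      apply Measure.map_congr
      refine (ae_restrict_iff' measurableSet_Ico).2 (Filter.Eventually.of_forall ?_)
      intro x hx
      simp only [tau, if_pos hx.2]
    have key2 : Measure.map tau (volume.restrict (Ico (0:ℝ) 1)) = volume.restrict (Ico (-1:ℝ) 0) := by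
      rw [← m2.map_eq]
      apply Measure.map_congr
      refine (ae_restrict_iff' measurableSet_Ico).2 (Filter.Eventually.of_forall ?_)
      intro x hx
      simp only [tau, if_neg (not_lt.2 hx.1)]
    rw [hsplit, Measure.map_add _ _ tau_meas, key1, key2, add_comm]


noncomputable def Sop : L2Ioo →L[ℂ] L2Ioo :=
  (Lp.compMeasurePreservingₗᵢ ℂ tau tau_mp).toContinuousLinearMap

lemma Sop_coeFn (f : L2Ioo) : (Sop f : ℝ → ℂ) =ᵐ[volIoo] f ∘ tau :=
  Lp.coeFn_compMeasurePreserving f tau_mp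

lemma Sop_norm (f : L2Ioo) : ‖Sop f‖ = ‖f‖ :=
  Lp.norm_compMeasurePreserving f tau_mp

lemma ae_Ioo {p : ℝ → Prop} (h : ∀ x ∈ Set.Ioo (-1:ℝ) 1, p x) : ∀ᵐ x ∂volIoo, p x := by
  unfold volIoo
  exact (ae_restrict_iff' measurableSet_Ioo).2 (Filter.Eventually.of_forall h)

lemma tau_tau (x : ℝ) (hx : x ∈ Set.Ioo (-1:ℝ) 1) : tau (tau x) = x := by
  rcases lt_or_ge x 0 with h | h
  · simp only [tau, if_pos h]
    rw [if_neg (by linarith [hx.1])]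
    ring
  · simp only [tau, if_neg (not_lt.2 h)]
    rw [if_pos (by linarith [hx.2])]
    ring

lemma Sop_Sop : Sop * Sop = 1 := by
  ext f
  have h1 : (Sop (Sop f) : ℝ → ℂ) =ᵐ[volIoo] (Sop f : ℝ → ℂ) ∘ tau := Sop_coeFn _
  have h2 : ((Sop f : ℝ → ℂ) ∘ tau) =ᵐ[volIoo] (f ∘ tau) ∘ tau :=
    tau_mp.quasiMeasurePreserving.ae_eq_comp (Sop_coeFn f)
  have h3 : ((f : ℝ → ℂ) ∘ tau ∘ tau) =ᵐ[volIoo] f := by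
    refine ae_Ioo fun x hx => ?_
    simp [Function.comp, tau_tau x hx]
  have h := h1.trans (h2.trans h3)
  simpa only [ContinuousLinearMap.mul_apply, ContinuousLinearMap.one_apply] using h

lemma Sop_sa : IsSelfAdjoint Sop := by
  rw [ContinuousLinearMap.isSelfAdjoint_iff_isSymmetric]
  intro x y
  have : ⟪Sop x, Sop (Sop y)⟫_ℂ = ⟪x, Sop y⟫_ℂ :=
    (Lp.compMeasurePreservingₗᵢ ℂ tau tau_mp).inner_map_map x (Sop y)
  have h2 : Sop (Sop y) = y := by
    have := congrFun (congrArg (fun (T : L2Ioo →L[ℂ] L2Ioo) => (T : L2Ioo → L2Ioo)) Sop_Sop) y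
    simpa [ContinuousLinearMap.mul_apply] using this
  rwa [h2] at this

instance fact02 : Fact ((0:ℝ) < 2) := ⟨by norm_num⟩

noncomputable abbrev vAC : Measure (AddCircle (2:ℝ)) := volume

noncomputable def myFourierLp (n : ℤ) : Lp ℂ 2 vAC :=
  ContinuousMap.toLp (E := ℂ) 2 vAC ℂ (fourier n)

lemma span_myFourierLp_dense :
    (span ℂ (Set.range myFourierLp)).topologicalClosure = ⊤ := by
  convert (ContinuousMap.toLp_denseRange (E := ℂ) (𝕜 := ℂ) (μ := vAC) (p := 2)
      (by norm_num)).topologicalClosure_map_submodule span_fourier_closure_eq_top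
  · rfl
  erw [map_span, Set.range_comp]
  rfl

lemma mk_mp : MeasurePreserving ((↑) : ℝ → AddCircle (2:ℝ)) volIoo vAC := by
  rw [volIoo_eq_Ioc]
  have := AddCircle.measurePreserving_mk (2:ℝ) (-1)
  norm_num at this
  exact this

noncomputable def psi : AddCircle (2:ℝ) → ℝ :=
  fun z => ((AddCircle.measurableEquivIoc (2:ℝ) (-1) z : Set.Ioc (-1:ℝ) (-1+2)) : ℝ)

lemma psi_meas : Measurable psi :=
  measurable_subtype_coe.comp (AddCircle.measurableEquivIoc (2:ℝ) (-1)).measurable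

lemma psi_mk (x : ℝ) (hx : x ∈ Set.Ioc (-1:ℝ) 1) : psi x = x := by
  unfold psi
  have hx' : x ∈ Set.Ioc (-1:ℝ) (-1+2) := by norm_num at hx ⊢; exact hx
  show ((AddCircle.equivIoc (2:ℝ) (-1) x : Set.Ioc (-1:ℝ) (-1+2)) : ℝ) = x
  rw [AddCircle.equivIoc, QuotientAddGroup.equivIocMod_coe]
  exact (toIocMod_eq_self _).mpr hx'

lemma psi_mp : MeasurePreserving psi vAC volIoo := by
  refine ⟨psi_meas, ?_⟩
  ext s hs
  rw [Measure.map_apply psi_meas hs]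
  have := mk_mp.measure_preimage ((psi_meas hs).nullMeasurableSet)
  rw [← this]
  unfold volIoo
  rw [Measure.restrict_apply (mk_mp.measurable (psi_meas hs)), Measure.restrict_apply hs]
  congr 1
  ext x
  simp only [Set.mem_inter_iff, Set.mem_preimage, and_congr_left_iff]
  intro hx
  have : psi ((x : AddCircle (2:ℝ))) = x := psi_mk x (Set.Ioo_subset_Ioc_self hx)
  rw [this]

noncomputable def Uop : Lp ℂ 2 vAC →L[ℂ] L2Ioo :=
  (Lp.compMeasurePreservingₗᵢ ℂ ((↑) : ℝ → AddCircle (2:ℝ)) mk_mp).toContinuousLinearMap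

noncomputable def Vop : L2Ioo →L[ℂ] Lp ℂ 2 vAC :=
  (Lp.compMeasurePreservingₗᵢ ℂ psi psi_mp).toContinuousLinearMap

lemma Uop_coeFn (g : Lp ℂ 2 vAC) :
    (Uop g : ℝ → ℂ) =ᵐ[volIoo] g ∘ ((↑) : ℝ → AddCircle (2:ℝ)) :=
  Lp.coeFn_compMeasurePreserving g mk_mp

lemma Uop_surj : Function.Surjective Uop := by
  intro f
  refine ⟨Vop f, Lp.ext ?_⟩
  have h1 : (Uop (Vop f) : ℝ → ℂ) =ᵐ[volIoo] (Vop f : AddCircle (2:ℝ) → ℂ) ∘ (↑) := Uop_coeFn _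
  have h2 : ((Vop f : AddCircle (2:ℝ) → ℂ) ∘ ((↑) : ℝ → AddCircle (2:ℝ))) =ᵐ[volIoo]
      ((f : ℝ → ℂ) ∘ psi) ∘ (↑) :=
    mk_mp.quasiMeasurePreserving.ae_eq_comp (Lp.coeFn_compMeasurePreserving f psi_mp)
  have h3 : (((f : ℝ → ℂ) ∘ psi) ∘ ((↑) : ℝ → AddCircle (2:ℝ))) =ᵐ[volIoo] f := by
    refine ae_Ioo fun x hx => ?_
    simp only [Function.comp_apply]
    rw [psi_mk x (Set.Ioo_subset_Ioc_self hx)]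
  exact h1.trans (h2.trans h3)

noncomputable def en (n : ℤ) : L2Ioo := Uop (myFourierLp n)

lemma en_coeFn (n : ℤ) :
    (en n : ℝ → ℂ) =ᵐ[volIoo] fun x : ℝ => Complex.exp (π * n * x * Complex.I) := by
  have h1 : (en n : ℝ → ℂ) =ᵐ[volIoo] (myFourierLp n : AddCircle (2:ℝ) → ℂ) ∘ (↑) :=
    Uop_coeFn _
  have h2 : ((myFourierLp n : AddCircle (2:ℝ) → ℂ) ∘ ((↑) : ℝ → AddCircle (2:ℝ))) =ᵐ[volIoo]
      (fourier n : C(AddCircle (2:ℝ), ℂ)) ∘ (↑) :=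
    mk_mp.quasiMeasurePreserving.ae_eq_comp (ContinuousMap.coeFn_toLp vAC (fourier n))
  refine (h1.trans h2).trans (Filter.Eventually.of_forall fun x => ?_)
  simp only [Function.comp_apply, fourier_coe_apply]
  congr 1
  push_cast
  ring

lemma exp_pi_int (n : ℤ) : Complex.exp (π * n * Complex.I) = (-1 : ℂ) ^ n := by
  rw [show (↑π * n * Complex.I : ℂ) = n * (π * Complex.I) by ring, Complex.exp_int_mul,
    Complex.exp_pi_mul_I]

lemma neg_one_zpow_inv (n : ℤ) : ((-1 : ℂ) ^ n)⁻¹ = (-1 : ℂ) ^ n := by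
  rw [← inv_zpow, inv_neg_one]

lemma Sop_en (n : ℤ) : Sop (en n) = ((-1 : ℂ) ^ n) • en n := by
  refine Lp.ext ?_
  have h1 : (Sop (en n) : ℝ → ℂ) =ᵐ[volIoo] (en n : ℝ → ℂ) ∘ tau := Sop_coeFn _
  have h2 : ((en n : ℝ → ℂ) ∘ tau) =ᵐ[volIoo]
      (fun x : ℝ => Complex.exp (π * n * x * Complex.I)) ∘ tau :=
    tau_mp.quasiMeasurePreserving.ae_eq_comp (en_coeFn n)
  have h4 : ((((-1 : ℂ) ^ n) • en n : L2Ioo) : ℝ → ℂ) =ᵐ[volIoo]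
      fun x : ℝ => ((-1 : ℂ) ^ n) * Complex.exp (π * n * x * Complex.I) := by
    refine (Lp.coeFn_smul _ _).trans ?_
    filter_upwards [en_coeFn n] with x hx
    simp [hx]
  refine (h1.trans h2).trans (Filter.EventuallyEq.trans ?_ h4.symm)
  refine ae_Ioo fun x hx => ?_
  simp only [Function.comp_apply]
  rcases lt_or_ge x 0 with h | h
  · rw [show tau x = x + 1 from if_pos h]
    rw [show (↑π * ↑n * ↑(x + 1) * Complex.I : ℂ)
        = ↑π * ↑n * ↑x * Complex.I + ↑π * ↑n * Complex.I by push_cast; ring,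
      Complex.exp_add, exp_pi_int, mul_comm]
  · rw [show tau x = x - 1 from if_neg (not_lt.2 h)]
    rw [show (↑π * ↑n * ↑(x - 1) * Complex.I : ℂ)
        = ↑π * ↑n * ↑x * Complex.I + -(↑π * ↑n * Complex.I) by push_cast; ring,
      Complex.exp_add, Complex.exp_neg, exp_pi_int, neg_one_zpow_inv, mul_comm]

lemma en_even_coeFn (k : ℤ) : (en (2 * k) : ℝ → ℂ) =ᵐ[volIoo]
    fun x => Complex.exp (((2 * π * (k : ℝ) * x : ℝ) : ℂ) * Complex.I) := by
  refine (en_coeFn (2 * k)).trans (Filter.Eventually.of_forall fun x => ?_)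
  norm_num
  congr 1
  push_cast
  ring

lemma genSet_iff (g : L2Ioo) :
    g ∈ {g : L2Ioo | ∃ k : ℤ, (g : ℝ → ℂ) =ᵐ[volIoo]
      fun x => Complex.exp (((2 * π * (k : ℝ) * x : ℝ) : ℂ) * Complex.I)} ↔
    ∃ k : ℤ, g = en (2 * k) := by
  constructor
  · rintro ⟨k, hk⟩
    exact ⟨k, Lp.ext (hk.trans (en_even_coeFn k).symm)⟩
  · rintro ⟨k, rfl⟩
    exact ⟨k, en_even_coeFn k⟩

noncomputable def Qop : L2Ioo →L[ℂ] L2Ioo := (2⁻¹ : ℂ) • (1 + Sop)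

lemma Qop_en_even (k : ℤ) : Qop (en (2 * k)) = en (2 * k) := by
  have h : ((-1 : ℂ) ^ (2 * k)) = 1 := by
    rw [zpow_mul]
    norm_num
  simp only [Qop, ContinuousLinearMap.smul_apply, ContinuousLinearMap.add_apply,
    ContinuousLinearMap.one_apply, Sop_en, h, one_smul, smul_add]
  module

lemma Qop_en_odd (k : ℤ) : Qop (en (2 * k + 1)) = 0 := by
  have h : ((-1 : ℂ) ^ (2 * k + 1)) = -1 := by
    rw [zpow_add₀ (by norm_num : (-1:ℂ) ≠ 0), mul_comm, zpow_mul]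
    norm_num
  simp only [Qop, ContinuousLinearMap.smul_apply, ContinuousLinearMap.add_apply,
    ContinuousLinearMap.one_apply, Sop_en, h, neg_one_smul]
  simp

lemma Qop_idem : Qop * Qop = Qop := by
  have h : (1 + Sop) * (1 + Sop) = (2 : ℂ) • (1 + Sop) := by
    rw [mul_add, add_mul, add_mul, one_mul, one_mul, mul_one, Sop_Sop]
    module
  unfold Qop
  rw [smul_mul_smul_comm, h, smul_smul]
  norm_num

lemma Qop_sa : IsSelfAdjoint Qop := by
  refine IsSelfAdjoint.smul ?_ (IsSelfAdjoint.add (IsSelfAdjoint.one _) Sop_sa)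
  rw [show ((2:ℂ)⁻¹) = ((2⁻¹ : ℝ) : ℂ) by norm_num]
  exact Complex.conj_ofReal _

lemma en_even_mem : ∀ k : ℤ, en (2 * k) ∈ evenHarmonics := fun k =>
  Submodule.le_topologicalClosure _ (Submodule.subset_span ((genSet_iff _).2 ⟨k, rfl⟩))

lemma evenHarmonics_le_range : evenHarmonics ≤ LinearMap.range (Qop : L2Ioo →ₗ[ℂ] L2Ioo) := by
  have hK : evenHarmonics ≤ LinearMap.ker ((1 - Qop : L2Ioo →L[ℂ] L2Ioo) : L2Ioo →ₗ[ℂ] L2Ioo) := by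
    refine Submodule.topologicalClosure_minimal _ (Submodule.span_le.2 ?_)
      (ContinuousLinearMap.isClosed_ker _)
    intro g hg
    obtain ⟨k, rfl⟩ := (genSet_iff g).1 hg
    simp only [SetLike.mem_coe, LinearMap.mem_ker, ContinuousLinearMap.coe_coe,
      ContinuousLinearMap.sub_apply, ContinuousLinearMap.one_apply, Qop_en_even, sub_self]
  intro f hf
  have := hK hf
  simp only [LinearMap.mem_ker, ContinuousLinearMap.coe_coe, ContinuousLinearMap.sub_apply,
    ContinuousLinearMap.one_apply, sub_eq_zero] at this
  exact ⟨f, this.symm⟩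

lemma Qop_mem_evenHarmonics (f : L2Ioo) : Qop f ∈ evenHarmonics := by
  set W : Submodule ℂ L2Ioo :=
    Submodule.comap (Qop : L2Ioo →ₗ[ℂ] L2Ioo) evenHarmonics with hW
  have hWclosed : IsClosed (W : Set L2Ioo) :=
    (Submodule.isClosed_topologicalClosure _).preimage Qop.continuous
  have hen : ∀ n : ℤ, en n ∈ W := by
    intro n
    rcases Int.even_or_odd n with ⟨k, hk⟩ | ⟨k, hk⟩
    · have : n = 2 * k := by omega
      subst this
      simpa [hW, Submodule.mem_comap, Qop_en_even] using en_even_mem k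
    · have : n = 2 * k + 1 := by omega
      subst this
      simp [hW, Submodule.mem_comap, Qop_en_odd, Submodule.zero_mem]
  suffices h : f ∈ W by simpa [hW, Submodule.mem_comap] using h
  obtain ⟨g, rfl⟩ := Uop_surj f
  have hg : g ∈ closure ((Submodule.span ℂ (Set.range myFourierLp) : Submodule ℂ _) : Set _) := by
    have : g ∈ (Submodule.span ℂ (Set.range myFourierLp)).topologicalClosure := by
      rw [span_myFourierLp_dense]; trivial
    exact this
  have himg : Uop '' ((Submodule.span ℂ (Set.range myFourierLp) : Submodule ℂ _) : Set _)
      ⊆ (W : Set L2Ioo) := by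
    rintro _ ⟨d, hd, rfl⟩
    induction hd using Submodule.span_induction with
    | mem x hx => obtain ⟨n, rfl⟩ := hx; exact hen n
    | zero => simpa using W.zero_mem
    | add x y _ _ hx hy => rw [map_add]; exact W.add_mem hx hy
    | smul c x _ hx => rw [_root_.map_smul]; exact W.smul_mem c hx
  have : Uop g ∈ closure (W : Set L2Ioo) := by
    have h1 : Uop g ∈ closure (Uop '' _) :=
      image_closure_subset_closure_image Uop.continuous ⟨g, hg, rfl⟩
    exact closure_mono himg h1
  rwa [hWclosed.closure_eq] at this

lemma range_Qop : LinearMap.range (Qop : L2Ioo →ₗ[ℂ] L2Ioo) = evenHarmonics :=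
  le_antisymm (by rintro _ ⟨g, rfl⟩; exact Qop_mem_evenHarmonics g) evenHarmonics_le_range

lemma P_eq_Qop (P : L2Ioo →L[ℂ] L2Ioo) (hPsa : IsSelfAdjoint P) (hPidem : P * P = P)
    (hPran : LinearMap.range (P : L2Ioo →ₗ[ℂ] L2Ioo) = evenHarmonics) : P = Qop := by
  have hPap : ∀ g, P (P g) = P g := by
    intro g
    have := DFunLike.congr_fun hPidem g
    simpa [ContinuousLinearMap.mul_apply] using this
  have hQap : ∀ g, Qop (Qop g) = Qop g := by
    intro g
    have := DFunLike.congr_fun Qop_idem g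
    simpa [ContinuousLinearMap.mul_apply] using this
  have hPQ : P * Qop = Qop := by
    refine ContinuousLinearMap.ext fun f => ?_
    have h : Qop f ∈ LinearMap.range (P : L2Ioo →ₗ[ℂ] L2Ioo) := by rw [hPran]; exact Qop_mem_evenHarmonics f
    obtain ⟨g, hg⟩ := h
    show P (Qop f) = Qop f
    rw [← hg]; exact hPap g
  have hQP : Qop * P = P := by
    refine ContinuousLinearMap.ext fun f => ?_
    have h : P f ∈ LinearMap.range (Qop : L2Ioo →ₗ[ℂ] L2Ioo) := by
      rw [range_Qop, ← hPran]; exact ⟨f, rfl⟩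
    obtain ⟨g, hg⟩ := h
    show Qop (P f) = P f
    rw [← hg]; exact hQap g
  have hstar := congrArg star hPQ
  rw [star_mul, hPsa.star_eq, Qop_sa.star_eq, hQP] at hstar
  exact hstar

lemma volIoo_ne_zero : volIoo ≠ 0 := by
  intro h
  have h2 : volIoo (Set.Ioo (-1:ℝ) 1) = 2 := by
    unfold volIoo
    rw [Measure.restrict_apply_self, Real.volume_Ioo]
    norm_num
  rw [h] at h2
  simp at h2

lemma en_zero_ne : en 0 ≠ 0 := by
  intro h
  have h1 : (en 0 : ℝ → ℂ) =ᵐ[volIoo] fun _ => (1 : ℂ) := by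
    refine (en_coeFn 0).trans (Filter.Eventually.of_forall fun x => ?_)
    norm_num
  rw [h] at h1
  have h2 : ((0 : L2Ioo) : ℝ → ℂ) =ᵐ[volIoo] fun _ => (0 : ℂ) := Lp.coeFn_zero ℂ 2 volIoo
  have h3 : ∀ᵐ _x ∂volIoo, (1 : ℂ) = 0 := by
    filter_upwards [h1, h2] with x hx1 hx2
    rw [← hx1, hx2]
  haveI : (ae volIoo).NeBot := ae_neBot.2 volIoo_ne_zero
  obtain ⟨x, hx⟩ := h3.exists
  exact one_ne_zero hx

lemma Cop_norm_apply (X : L2Ioo →L[ℂ] L2Ioo)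
    (hX : ∀ f : L2Ioo, (X f : ℝ → ℂ) =ᵐ[volIoo] fun x => (x : ℂ) * f x) (f : L2Ioo) :
    ‖(X * Sop - Sop * X) f‖ = ‖f‖ := by
  have hsub : ((X * Sop - Sop * X) f : ℝ → ℂ) =ᵐ[volIoo]
      fun x : ℝ => (X (Sop f) : ℝ → ℂ) x - (Sop (X f) : ℝ → ℂ) x := by
    have := Lp.coeFn_sub (X (Sop f)) (Sop (X f))
    have h' := (by simpa [ContinuousLinearMap.sub_apply, ContinuousLinearMap.mul_apply] using this :
      ((X * Sop - Sop * X) f : ℝ → ℂ) =ᵐ[volIoo] (X (Sop f) : ℝ → ℂ) - (Sop (X f) : ℝ → ℂ))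
    exact h'
  have a1 : (X (Sop f) : ℝ → ℂ) =ᵐ[volIoo] fun x : ℝ => (x : ℂ) * f (tau x) := by
    filter_upwards [hX (Sop f), Sop_coeFn f] with x h1 h2
    rw [h1, h2]; rfl
  have a2 : (Sop (X f) : ℝ → ℂ) =ᵐ[volIoo] fun x : ℝ => (tau x : ℂ) * f (tau x) := by
    have h1 : (Sop (X f) : ℝ → ℂ) =ᵐ[volIoo] (X f : ℝ → ℂ) ∘ tau := Sop_coeFn _
    have h2 : ((X f : ℝ → ℂ) ∘ tau) =ᵐ[volIoo] (fun x : ℝ => (x : ℂ) * f x) ∘ tau :=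
      tau_mp.quasiMeasurePreserving.ae_eq_comp (hX f)
    exact (h1.trans h2).trans (Filter.Eventually.of_forall fun x => rfl)
  have key : ∀ᵐ x ∂volIoo, ‖((X * Sop - Sop * X) f : ℝ → ℂ) x‖ = ‖(Sop f : ℝ → ℂ) x‖ := by
    have h3 : (Sop f : ℝ → ℂ) =ᵐ[volIoo] fun x : ℝ => f (tau x) :=
      (Sop_coeFn f).trans (Filter.Eventually.of_forall fun x => rfl)
    have h4 : ∀ᵐ x ∂volIoo, |x - tau x| = 1 := by
      refine ae_Ioo fun x hx => ?_
      rcases lt_or_ge x 0 with h | h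
      · rw [show tau x = x + 1 from if_pos h]; norm_num
      · rw [show tau x = x - 1 from if_neg (not_lt.2 h)]; norm_num
    filter_upwards [hsub, a1, a2, h3, h4] with x h1 h2 h5 h6 h7
    rw [h1, h2, h5, h6, ← sub_mul, norm_mul]
    have : ‖(x : ℂ) - (tau x : ℂ)‖ = 1 := by
      rw [← Complex.ofReal_sub, Complex.norm_real, Real.norm_eq_abs, h7]
    rw [this, one_mul]
  calc ‖(X * Sop - Sop * X) f‖ = ‖Sop f‖ := by
        rw [Lp.norm_def, Lp.norm_def, eLpNorm_congr_norm_ae key]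
    _ = ‖f‖ := Sop_norm f

/-- Let `P` be the orthogonal projection of `L²((-1,1), ℂ)` onto the closed
span of the even harmonics and let `x̂` be the self-adjoint multiplication operator by the
independent variable. Then `‖2x̂P − P(2x̂)‖ = 1`, i.e. `‖x̂P − Px̂‖ = 1/2`. -/
theorem norm_commutator_position_projection (P : L2Ioo →L[ℂ] L2Ioo)
    (hPsa : IsSelfAdjoint P) (hPidem : P * P = P)
    (hPran : LinearMap.range (P : L2Ioo →ₗ[ℂ] L2Ioo) = evenHarmonics)
    (X : L2Ioo →L[ℂ] L2Ioo) (hXsa : IsSelfAdjoint X)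
    (hX : ∀ f : L2Ioo, (X f : ℝ → ℂ) =ᵐ[volIoo] fun x => (x : ℂ) * f x) :
    ‖(2 : ℂ) • (X * P) - (2 : ℂ) • (P * X)‖ = 1 ∧ ‖X * P - P * X‖ = 1 / 2 := by
  have hPQ := P_eq_Qop P hPsa hPidem hPran
  have hCnorm : ‖X * Sop - Sop * X‖ = 1 := by
    refine le_antisymm (ContinuousLinearMap.opNorm_le_bound _ zero_le_one fun f => by
      rw [Cop_norm_apply X hX f, one_mul]) ?_
    have h := (X * Sop - Sop * X).le_opNorm (en 0)
    rw [Cop_norm_apply X hX] at h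
    have hpos : (0:ℝ) < ‖en 0‖ := norm_pos_iff.2 en_zero_ne
    exact (mul_le_mul_iff_left₀ hpos).1 (by rwa [one_mul])
  have hcomm : X * P - P * X = (2⁻¹ : ℂ) • (X * Sop - Sop * X) := by
    rw [hPQ]
    unfold Qop
    rw [mul_smul_comm, smul_mul_assoc, ← smul_sub]
    congr 1
    rw [mul_add, add_mul, mul_one, one_mul]
    abel
  constructor
  · rw [← smul_sub, hcomm, smul_smul, show ((2:ℂ) * 2⁻¹) = 1 by norm_num, one_smul, hCnorm]
  · have happ : ∀ f, ‖(X * P - P * X) f‖ = 2⁻¹ * ‖f‖ := by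
      intro f
      have hrfl : (X * P - P * X) f = (2⁻¹ : ℂ) • ((X * Sop - Sop * X) f) := by
        rw [hcomm]; rfl
      rw [hrfl, norm_smul, Cop_norm_apply X hX f]
      norm_num
    refine le_antisymm (ContinuousLinearMap.opNorm_le_bound _ (by norm_num) fun f => ?_) ?_
    · rw [happ f]; norm_num
    · have h := (X * P - P * X).le_opNorm (en 0)
      rw [happ] at h
      have hpos : (0:ℝ) < ‖en 0‖ := norm_pos_iff.2 en_zero_ne
      have h2 := (mul_le_mul_iff_left₀ hpos).1 h
      linarith
end
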